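/- arXiv:1612.03535 — 12 statements merged into one kernel-verified Lean document; each statement's English description precedes it below -/
import Mathlib

section
/- For every x ∈ M there exist c ∈ {0,1} and T > 0 such that g(ψ_t(x)) = c for all t ≥ T; likewise there exist c' ∈ {0,1} and T' > 0 such that g(ψ_t(x)) = c' for all t ≤ −T'. In particular the limits lim_{t→+∞} g(ψ_t(x)) and lim_{t→−∞} g(ψ_t(x)) exist and lie in {0,1}. -/
open Filter Topology

/-- The set `X_{i,j}` of points whose `g`-value along the flow tends to `i`
as `t → -∞` and to `j` as `t → +∞`. -/
def Xset {M : Type*} (ψ : ℝ → M → M) (g : M → ℝ) (i j : ℝ) : Set M :=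
  {x | Tendsto (fun t => g (ψ t x)) atBot (nhds i) ∧
       Tendsto (fun t => g (ψ t x)) atTop (nhds j)}

/-- The Fuller average `g_n(x) = (1/(2n)) ∫_{-n}^{n} g(ψ_t(x)) dt`. -/
noncomputable def gAvg {M : Type*} (ψ : ℝ → M → M) (g : M → ℝ) (n : ℕ) (x : M) : ℝ :=
  (1 / (2 * (n : ℝ))) * ∫ t in (-(n : ℝ))..(n : ℝ), g (ψ t x)

/-- The function `p(x) = Σ_{n=1}^∞ 2^{-n} g_n(x)`. -/
noncomputable def pFun {M : Type*} (ψ : ℝ → M → M) (g : M → ℝ) (x : M) : ℝ :=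
  ∑' n : ℕ, (1 / 2 : ℝ) ^ (n + 1) * gAvg ψ g (n + 1) x

/-- The set `U_{0,0}` of points of `X_{0,0}` whose orbit is not entirely at `g`-value 0. -/
def U00 {M : Type*} (ψ : ℝ → M → M) (g : M → ℝ) : Set M :=
  {x ∈ Xset ψ g 0 0 | ∃ t : ℝ, g (ψ t x) ≠ 0}

/-- The set `U_{1,1}` of points of `X_{1,1}` whose orbit is not entirely at `g`-value 1. -/
def U11 {M : Type*} (ψ : ℝ → M → M) (g : M → ℝ) : Set M :=
  {x ∈ Xset ψ g 1 1 | ∃ t : ℝ, g (ψ t x) ≠ 1}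


lemma aux_ray (h : ℝ → ℝ) (hc : Continuous h) (a : ℝ)
    (hv : ∀ t, a ≤ t → h t = 0 ∨ h t = 1) :
    ∃ c ∈ ({0, 1} : Set ℝ), ∃ T > (0 : ℝ),
      (∀ t ≥ T, h t = c) ∧ Tendsto h atTop (nhds c) := by
  set T : ℝ := max a 1 with hT
  have hTa : a ≤ T := le_max_left _ _
  have hT0 : (0:ℝ) < T := lt_of_lt_of_le one_pos (le_max_right _ _)
  have hconst : ∀ t ≥ T, h t = h T := by
    intro t ht
    by_contra hne
    have h12 : (1/2 : ℝ) ∈ Set.uIcc (h T) (h t) := by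
      rcases hv T hTa with hT' | hT' <;> rcases hv t (hTa.trans ht) with ht' | ht' <;>
        rw [hT', ht'] <;>
        first
          | exact absurd (ht'.trans hT'.symm) hne
          | (rw [Set.mem_uIcc]; norm_num)
    obtain ⟨s, hs, hs2⟩ := intermediate_value_uIcc (a := T) (b := t) hc.continuousOn h12
    have hsa : a ≤ s := by
      rw [Set.uIcc_of_le ht] at hs
      exact hTa.trans hs.1
    rcases hv s hsa with h' | h' <;> rw [h'] at hs2 <;> norm_num at hs2
  refine ⟨h T, ?_, T, hT0, hconst, ?_⟩
  · rcases hv T hTa with h' | h' <;> simp [h']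
  · refine Tendsto.congr' ?_ tendsto_const_nhds
    filter_upwards [eventually_ge_atTop T] with t ht using (hconst t ht).symm

/-- along the flow, `g` is eventually constant (equal to 0 or 1)
in forward time and in backward time; in particular the limits as `t → ±∞`
exist and lie in `{0,1}`. -/
theorem stmt_0
    {M : Type*} [TopologicalSpace M] (ψ : ℝ → M → M)
    (hcont : Continuous fun q : ℝ × M => ψ q.1 q.2)
    (hzero : ∀ x, ψ 0 x = x)
    (hadd : ∀ s t x, ψ (s + t) x = ψ s (ψ t x))
    (g : M → ℝ) (hg : Continuous g) (hg01 : ∀ x, g x ∈ Set.Icc (0 : ℝ) 1)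
    (ℓ : ℝ) (hℓ : 0 < ℓ)
    (hgate : ∀ x, 0 < g x → g x < 1 → ∀ t : ℝ, ℓ < |t| →
      g (ψ t x) = 0 ∨ g (ψ t x) = 1)
    (x : M) :
    (∃ c ∈ ({0, 1} : Set ℝ), ∃ T > (0 : ℝ),
        (∀ t ≥ T, g (ψ t x) = c) ∧
        Filter.Tendsto (fun t => g (ψ t x)) Filter.atTop (nhds c)) ∧
    (∃ c' ∈ ({0, 1} : Set ℝ), ∃ T' > (0 : ℝ),
        (∀ t ≤ -T', g (ψ t x) = c') ∧
        Filter.Tendsto (fun t => g (ψ t x)) Filter.atBot (nhds c')) := by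
  set h : ℝ → ℝ := fun t => g (ψ t x) with hh
  have hc : Continuous h :=
    hg.comp (hcont.comp (continuous_id.prodMk continuous_const))
  have hfwd : ∃ a : ℝ, ∀ t, a ≤ t → h t = 0 ∨ h t = 1 := by
    by_cases hall : ∀ t, h t = 0 ∨ h t = 1
    · exact ⟨0, fun t _ => hall t⟩
    · push_neg at hall
      obtain ⟨t₀, h0, h1⟩ := hall
      have hpos : 0 < g (ψ t₀ x) := lt_of_le_of_ne (hg01 _).1 (Ne.symm h0)
      have hlt : g (ψ t₀ x) < 1 := lt_of_le_of_ne (hg01 _).2 h1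
      refine ⟨t₀ + ℓ + 1, fun t ht => ?_⟩
      have : h t = g (ψ (t - t₀) (ψ t₀ x)) := by
        rw [hh]; simp only [← hadd, sub_add_cancel]
      rw [this]
      exact hgate _ hpos hlt _ (by rw [abs_of_pos (by linarith)]; linarith)
  have hbwd : ∃ a : ℝ, ∀ t, a ≤ t → h (-t) = 0 ∨ h (-t) = 1 := by
    by_cases hall : ∀ t, h t = 0 ∨ h t = 1
    · exact ⟨0, fun t _ => hall (-t)⟩
    · push_neg at hall
      obtain ⟨t₀, h0, h1⟩ := hall
      have hpos : 0 < g (ψ t₀ x) := lt_of_le_of_ne (hg01 _).1 (Ne.symm h0)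
      have hlt : g (ψ t₀ x) < 1 := lt_of_le_of_ne (hg01 _).2 h1
      refine ⟨-t₀ + ℓ + 1, fun t ht => ?_⟩
      have : h (-t) = g (ψ (-t - t₀) (ψ t₀ x)) := by
        rw [hh]; simp only [← hadd, sub_add_cancel]
      rw [this]
      exact hgate _ hpos hlt _ (by rw [abs_of_neg (by linarith)]; linarith)
  constructor
  · obtain ⟨a, hv⟩ := hfwd
    exact aux_ray h hc a hv
  · obtain ⟨a, hv⟩ := hbwd
    obtain ⟨c, hc01, T, hT0, hconst, htend⟩ :=
      aux_ray (fun t => h (-t)) (hc.comp continuous_neg) a hv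
    refine ⟨c, hc01, T, hT0, fun t ht => ?_, ?_⟩
    · have := hconst (-t) (by linarith)
      simpa using this
    · have : Filter.Tendsto (fun t => h (- -t)) Filter.atBot (nhds c) :=
        htend.comp tendsto_neg_atBot_atTop
      exact this.congr fun t => by rw [neg_neg]
end

section
/- M is the union of the four sets X_{0,0}, X_{0,1}, X_{1,0}, and X_{1,1}, and these four sets are pairwise disjoint. -/
open Filter Topology

lemma aux_tendsto (h : ℝ → ℝ) (hc : Continuous h) (c : ℝ)
    (H : ∀ t : ℝ, c < t → h t = 0 ∨ h t = 1) :
    ∃ j : ℝ, (j = 0 ∨ j = 1) ∧ Tendsto h atTop (nhds j) := by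
  have hU : IsOpen (h ⁻¹' (Set.Iio (1/2))) := isOpen_Iio.preimage hc
  have hV : IsOpen (h ⁻¹' (Set.Ioi (1/2))) := isOpen_Ioi.preimage hc
  have hdis : Disjoint (h ⁻¹' (Set.Iio (1/2))) (h ⁻¹' (Set.Ioi (1/2))) := by
    rw [Set.disjoint_left]
    intro a ha hb
    simp only [Set.mem_preimage, Set.mem_Iio, Set.mem_Ioi] at ha hb
    linarith
  have hsub : Set.Ioi c ⊆ h ⁻¹' (Set.Iio (1/2)) ∪ h ⁻¹' (Set.Ioi (1/2)) := by
    intro t ht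
    rcases H t ht with h0 | h1
    · left; simp only [Set.mem_preimage, Set.mem_Iio, h0]; norm_num
    · right; simp only [Set.mem_preimage, Set.mem_Ioi, h1]; norm_num
  have hc1 : c < c + 1 := by linarith
  rcases H (c + 1) hc1 with h0 | h1
  · refine ⟨0, Or.inl rfl, ?_⟩
    have hIU : Set.Ioi c ⊆ h ⁻¹' (Set.Iio (1/2)) :=
      isPreconnected_Ioi.subset_left_of_subset_union hU hV hdis hsub
        ⟨c + 1, hc1, by simp only [Set.mem_preimage, Set.mem_Iio, h0]; norm_num⟩
    refine tendsto_const_nhds.congr' ?_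
    filter_upwards [eventually_gt_atTop c] with t ht
    have := hIU ht
    simp only [Set.mem_preimage, Set.mem_Iio] at this
    rcases H t ht with h' | h'
    · exact h'.symm
    · linarith
  · refine ⟨1, Or.inr rfl, ?_⟩
    have hIV : Set.Ioi c ⊆ h ⁻¹' (Set.Ioi (1/2)) :=
      isPreconnected_Ioi.subset_right_of_subset_union hU hV hdis hsub
        ⟨c + 1, hc1, by simp only [Set.mem_preimage, Set.mem_Ioi, h1]; norm_num⟩
    refine tendsto_const_nhds.congr' ?_
    filter_upwards [eventually_gt_atTop c] with t ht
    have := hIV ht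
    simp only [Set.mem_preimage, Set.mem_Ioi] at this
    rcases H t ht with h' | h'
    · linarith
    · exact h'.symm


/-- `M` is the union of the four sets `X_{0,0}`, `X_{0,1}`,
`X_{1,0}`, `X_{1,1}`, and these four sets are pairwise disjoint. -/
theorem stmt_1
    {M : Type*} [TopologicalSpace M] (ψ : ℝ → M → M)
    (hcont : Continuous fun q : ℝ × M => ψ q.1 q.2)
    (hzero : ∀ x, ψ 0 x = x)
    (hadd : ∀ s t x, ψ (s + t) x = ψ s (ψ t x))
    (g : M → ℝ) (hg : Continuous g) (hg01 : ∀ x, g x ∈ Set.Icc (0 : ℝ) 1)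
    (ℓ : ℝ) (hℓ : 0 < ℓ)
    (hgate : ∀ x, 0 < g x → g x < 1 → ∀ t : ℝ, ℓ < |t| →
      g (ψ t x) = 0 ∨ g (ψ t x) = 1) :
    (Xset ψ g 0 0 ∪ Xset ψ g 0 1 ∪ Xset ψ g 1 0 ∪ Xset ψ g 1 1 = Set.univ) ∧
    (∀ i j i' j' : ℝ, i ∈ ({0, 1} : Set ℝ) → j ∈ ({0, 1} : Set ℝ) →
      i' ∈ ({0, 1} : Set ℝ) → j' ∈ ({0, 1} : Set ℝ) →
      (i, j) ≠ (i', j') → Disjoint (Xset ψ g i j) (Xset ψ g i' j')) := by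
  constructor
  · ext x
    simp only [Set.mem_univ, iff_true, Set.mem_union]
    set h : ℝ → ℝ := fun t => g (ψ t x) with hh
    have hhc : Continuous h := by
      apply hg.comp
      exact hcont.comp (continuous_id.prodMk continuous_const)
    -- find c with gate property
    have key : ∃ c : ℝ, ∀ t : ℝ, c < |t| → h t = 0 ∨ h t = 1 := by
      by_cases hex : ∃ s, 0 < h s ∧ h s < 1
      · obtain ⟨s, hs1, hs2⟩ := hex
        refine ⟨|s| + ℓ, fun t ht => ?_⟩
        have habs : ℓ < |t - s| := by
          have := abs_sub_abs_le_abs_sub t s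
          linarith
        have heq : ψ (t - s) (ψ s x) = ψ t x := by
          rw [← hadd]; ring_nf
        have := hgate (ψ s x) hs1 hs2 (t - s) habs
        rwa [heq] at this
      · push_neg at hex
        refine ⟨0, fun t _ => ?_⟩
        rcases eq_or_lt_of_le (hg01 (ψ t x)).1 with h0 | hpos
        · exact Or.inl h0.symm
        · exact Or.inr (le_antisymm (hg01 (ψ t x)).2 (hex t hpos))
    obtain ⟨c, hc⟩ := key
    obtain ⟨j, hj, htop⟩ := aux_tendsto h hhc c (fun t ht => hc t (lt_of_lt_of_le ht (le_abs_self t)))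
    obtain ⟨i, hi, hbot'⟩ := aux_tendsto (fun t => h (-t)) (hhc.comp continuous_neg) c
      (fun t ht => hc (-t) (by rw [abs_neg]; exact lt_of_lt_of_le ht (le_abs_self t)))
    have hbot : Tendsto h atBot (nhds i) := by
      have := hbot'.comp tendsto_neg_atBot_atTop
      exact this.congr fun t => by simp only [Function.comp, neg_neg]
    have hmem : ∀ i' j' : ℝ, i = i' → j = j' → x ∈ Xset ψ g i' j' := by
      intro i' j' hi' hj'; exact ⟨hi' ▸ hbot, hj' ▸ htop⟩
    rcases hi with hi | hi <;> rcases hj with hj | hj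
    · exact Or.inl (Or.inl (Or.inl (hmem 0 0 hi hj)))
    · exact Or.inl (Or.inl (Or.inr (hmem 0 1 hi hj)))
    · exact Or.inl (Or.inr (hmem 1 0 hi hj))
    · exact Or.inr (hmem 1 1 hi hj)
  · intro i j i' j' _ _ _ _ hne
    rw [Set.disjoint_left]
    intro x hx hx'
    exact hne (Prod.ext (tendsto_nhds_unique hx.1 hx'.1) (tendsto_nhds_unique hx.2 hx'.2))
end

section
/- The subsets X_{0,0} and X_{1,1} are closed in M. -/
open Filter Topology

set_option linter.unusedSectionVars false

section Aux

variable {M : Type*} [TopologicalSpace M]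

/-- Core contradiction for ordered times. -/
lemma core_aux (ψ : ℝ → M → M) (g : M → ℝ)
    (hadd : ∀ s t x, ψ (s + t) x = ψ s (ψ t x))
    (hg01 : ∀ x, g x ∈ Set.Icc (0 : ℝ) 1)
    (ℓ : ℝ) (hℓ : 0 < ℓ)
    (hgate : ∀ x, 0 < g x → g x < 1 → ∀ t : ℝ, ℓ < |t| →
      g (ψ t x) = 0 ∨ g (ψ t x) = 1)
    (y : M) (hu : Continuous fun t : ℝ => g (ψ t y))
    (hbot : Tendsto (fun t => g (ψ t y)) atBot (nhds 0))
    (htop : Tendsto (fun t => g (ψ t y)) atTop (nhds 0))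
    (t₁ t₂ : ℝ) (hlt : 2 * ℓ < t₂ - t₁)
    (h1 : g (ψ t₁ y) ≠ 0) (h2 : g (ψ t₂ y) ≠ 0) : False := by
  set u : ℝ → ℝ := fun t => g (ψ t y) with hu_def
  -- the flow identity, in a convenient form
  have hflow : ∀ s t : ℝ, g (ψ t (ψ s y)) = u (t + s) := by
    intro s t
    rw [hu_def]
    simp [← hadd]
  -- Step 1: find s ≤ t₁ with 0 < u s < 1
  obtain ⟨s, hs_le, hs0, hs1⟩ : ∃ s, s ≤ t₁ ∧ 0 < u s ∧ u s < 1 := by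
    have h1pos : 0 < u t₁ := lt_of_le_of_ne (hg01 _).1 (Ne.symm h1)
    rcases lt_or_eq_of_le (hg01 (ψ t₁ y)).2 with hlt1 | heq1
    · exact ⟨t₁, le_refl _, h1pos, hlt1⟩
    · -- u t₁ = 1; find a crossing at value 1/2 to the left
      have hev : ∀ᶠ t in atBot, u t < 1/2 :=
        hbot.eventually_lt_const (by norm_num)
      obtain ⟨t₀, ht₀lt, ht₀le⟩ := (hev.and (eventually_le_atBot t₁)).exists
      have hiv := intermediate_value_Icc ht₀le (hu.continuousOn (s := Set.Icc t₀ t₁))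
      have hmem : (1/2 : ℝ) ∈ Set.Icc (u t₀) (u t₁) :=
        ⟨le_of_lt ht₀lt, by show (1/2 : ℝ) ≤ g (ψ t₁ y); rw [heq1]; norm_num⟩
      obtain ⟨s, hs_mem, hs_eq⟩ := hiv hmem
      exact ⟨s, hs_mem.2, by rw [hs_eq]; norm_num, by rw [hs_eq]; norm_num⟩
  have hgate_s : ∀ t : ℝ, ℓ < |t - s| → u t = 0 ∨ u t = 1 := by
    intro t ht
    have := hgate (ψ s y) hs0 hs1 (t - s) ht
    rwa [hflow, sub_add_cancel] at this
  -- Step 2: u t₂ = 1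
  have hs_t₂ : ℓ < t₂ - s := by nlinarith
  have h2one : u t₂ = 1 := by
    rcases hgate_s t₂ (by rw [abs_of_pos (by linarith)]; exact hs_t₂) with h | h
    · exact absurd h h2
    · exact h
  -- Step 3: crossing at 1/2 to the right of t₂, contradiction with the gate
  have hev : ∀ᶠ t in atTop, u t < 1/2 := htop.eventually_lt_const (by norm_num)
  obtain ⟨t₃, ht₃lt, ht₃ge⟩ := (hev.and (eventually_ge_atTop t₂)).exists
  have hiv := intermediate_value_Icc' ht₃ge (hu.continuousOn (s := Set.Icc t₂ t₃))
  have hmem : (1/2 : ℝ) ∈ Set.Icc (u t₃) (u t₂) :=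
    ⟨le_of_lt ht₃lt, by rw [show u t₂ = 1 from h2one]; norm_num⟩
  obtain ⟨r, hr_mem, hr_eq⟩ := hiv hmem
  have hr_gate : u r = 0 ∨ u r = 1 := by
    refine hgate_s r ?_
    have h1r : t₂ ≤ r := hr_mem.1
    rw [abs_of_pos (by linarith)]
    linarith
  rcases hr_gate with h | h <;> rw [hr_eq] at h <;> norm_num at h

/-- Closedness of `Xset ψ g 0 0`. -/
lemma key_closed (ψ : ℝ → M → M)
    (hcont : Continuous fun q : ℝ × M => ψ q.1 q.2)
    (hadd : ∀ s t x, ψ (s + t) x = ψ s (ψ t x))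
    (g : M → ℝ) (hg : Continuous g) (hg01 : ∀ x, g x ∈ Set.Icc (0 : ℝ) 1)
    (ℓ : ℝ) (hℓ : 0 < ℓ)
    (hgate : ∀ x, 0 < g x → g x < 1 → ∀ t : ℝ, ℓ < |t| →
      g (ψ t x) = 0 ∨ g (ψ t x) = 1) :
    IsClosed (Xset ψ g 0 0) := by
  have hu : ∀ y : M, Continuous fun t : ℝ => g (ψ t y) := fun y =>
    hg.comp (hcont.comp (continuous_id.prodMk continuous_const))
  have hset : Xset ψ g 0 0 =
      ⋂ (t₁ : ℝ) (t₂ : ℝ) (_ : 2 * ℓ < |t₁ - t₂|),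
        {y : M | g (ψ t₁ y) = 0 ∨ g (ψ t₂ y) = 0} := by
    ext y
    simp only [Set.mem_iInter, Set.mem_setOf_eq, Xset, Set.mem_setOf_eq]
    constructor
    · rintro ⟨hbot, htop⟩ t₁ t₂ hdist
      by_contra hcon
      push_neg at hcon
      obtain ⟨h1, h2⟩ := hcon
      rcases abs_cases (t₁ - t₂) with ⟨habs, _⟩ | ⟨habs, _⟩
      · exact core_aux ψ g hadd hg01 ℓ hℓ hgate y (hu y) hbot htop t₂ t₁
          (by rw [habs] at hdist; linarith) h2 h1
      · exact core_aux ψ g hadd hg01 ℓ hℓ hgate y (hu y) hbot htop t₁ t₂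
          (by rw [habs] at hdist; linarith) h1 h2
    · intro hC
      by_cases hex : ∃ t₀ : ℝ, g (ψ t₀ y) ≠ 0
      · obtain ⟨t₀, ht₀⟩ := hex
        have hzero : ∀ t : ℝ, 2 * ℓ < |t₀ - t| → g (ψ t y) = 0 := by
          intro t ht
          rcases hC t₀ t ht with h | h
          · exact absurd h ht₀
          · exact h
        constructor
        · refine Tendsto.congr' ?_ (tendsto_const_nhds (α := ℝ))
          filter_upwards [eventually_le_atBot (t₀ - (2 * ℓ + 1))] with t ht
          exact (hzero t (by rw [abs_of_pos (by linarith)]; linarith)).symm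
        · refine Tendsto.congr' ?_ (tendsto_const_nhds (α := ℝ))
          filter_upwards [eventually_ge_atTop (t₀ + (2 * ℓ + 1))] with t ht
          exact (hzero t (by rw [abs_of_neg (by linarith)]; linarith)).symm
      · push_neg at hex
        constructor <;>
          · refine Tendsto.congr' ?_ (tendsto_const_nhds (α := ℝ))
            filter_upwards with t
            exact (hex t).symm
  rw [hset]
  refine isClosed_iInter fun t₁ => isClosed_iInter fun t₂ => isClosed_iInter fun _ => ?_
  have : {y : M | g (ψ t₁ y) = 0 ∨ g (ψ t₂ y) = 0} =
      (fun y => g (ψ t₁ y) * g (ψ t₂ y)) ⁻¹' {0} := by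
    ext y; simp [mul_eq_zero]
  rw [this]
  have hc : ∀ t : ℝ, Continuous fun y : M => g (ψ t y) := fun t =>
    hg.comp (hcont.comp (continuous_const.prodMk continuous_id))
  exact IsClosed.preimage ((hc t₁).mul (hc t₂)) isClosed_singleton


lemma tendsto_one_iff_sub {α : Type*} {l : Filter α} {f : α → ℝ} :
    Tendsto f l (nhds 1) ↔ Tendsto (fun t => 1 - f t) l (nhds 0) := by
  constructor
  · intro h
    have := (tendsto_const_nhds (x := (1:ℝ)) (f := l)).sub h
    simpa using this
  · intro h
    have := (tendsto_const_nhds (x := (1:ℝ)) (f := l)).sub h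
    simpa using this

end Aux

/-- the subsets `X_{0,0}` and `X_{1,1}` are closed in `M`. -/
theorem stmt_2
    {M : Type*} [TopologicalSpace M] (ψ : ℝ → M → M)
    (hcont : Continuous fun q : ℝ × M => ψ q.1 q.2)
    (hzero : ∀ x, ψ 0 x = x)
    (hadd : ∀ s t x, ψ (s + t) x = ψ s (ψ t x))
    (g : M → ℝ) (hg : Continuous g) (hg01 : ∀ x, g x ∈ Set.Icc (0 : ℝ) 1)
    (ℓ : ℝ) (hℓ : 0 < ℓ)
    (hgate : ∀ x, 0 < g x → g x < 1 → ∀ t : ℝ, ℓ < |t| →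
      g (ψ t x) = 0 ∨ g (ψ t x) = 1) :
    IsClosed (Xset ψ g 0 0) ∧ IsClosed (Xset ψ g 1 1) := by
  constructor
  · exact key_closed ψ hcont hadd g hg hg01 ℓ hℓ hgate
  · set g' : M → ℝ := fun x => 1 - g x with hg'_def
    have hg'c : Continuous g' := continuous_const.sub hg
    have hg'01 : ∀ x, g' x ∈ Set.Icc (0 : ℝ) 1 := fun x =>
      ⟨by have := (hg01 x).2; simp [hg'_def]; linarith,
       by have := (hg01 x).1; simp [hg'_def]; linarith⟩
    have hgate' : ∀ x, 0 < g' x → g' x < 1 → ∀ t : ℝ, ℓ < |t| →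
        g' (ψ t x) = 0 ∨ g' (ψ t x) = 1 := by
      intro x h0 h1 t ht
      rcases hgate x (by simp [hg'_def] at h1; linarith)
        (by simp [hg'_def] at h0; linarith) t ht with h | h
      · right; simp [hg'_def, h]
      · left; simp [hg'_def, h]
    have hXeq : Xset ψ g 1 1 = Xset ψ g' 0 0 := by
      ext y
      simp only [Xset, Set.mem_setOf_eq]
      constructor
      · rintro ⟨h1, h2⟩
        exact ⟨tendsto_one_iff_sub.mp h1, tendsto_one_iff_sub.mp h2⟩
      · rintro ⟨h1, h2⟩
        exact ⟨tendsto_one_iff_sub.mpr h1, tendsto_one_iff_sub.mpr h2⟩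
    rw [hXeq]
    exact key_closed ψ hcont hadd g' hg'c hg'01 ℓ hℓ hgate'
end

section
/- If M is connected and both X_{0,0} and X_{1,1} are nonempty, then at least one of X_{0,1} or X_{1,0} is nonempty. -/
open Filter Topology MeasureTheory

lemma ray_const {f : ℝ → ℝ} (hf : Continuous f) {s : Set ℝ} (hs : s.OrdConnected)
    (h01 : ∀ t ∈ s, f t = 0 ∨ f t = 1) :
    (∀ t ∈ s, f t = 0) ∨ (∀ t ∈ s, f t = 1) := by
  by_contra h
  push_neg at h
  obtain ⟨⟨a, ha, ha0⟩, ⟨b, hb, hb1⟩⟩ := h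
  have ha1 : f a = 1 := (h01 a ha).resolve_left ha0
  have hb0 : f b = 0 := (h01 b hb).resolve_right hb1
  have hsub : Set.uIcc b a ⊆ s := hs.uIcc_subset hb ha
  have hiv := intermediate_value_uIcc (f := f) (a := b) (b := a) hf.continuousOn
  have hmem : (1/2 : ℝ) ∈ Set.uIcc (f b) (f a) := by
    rw [hb0, ha1, Set.uIcc_of_le (by norm_num)]
    constructor <;> norm_num
  obtain ⟨c, hc, hfc⟩ := hiv hmem
  rcases h01 c (hsub hc) with h | h <;> rw [hfc] at h <;> norm_num at h

lemma orbit_struct {M : Type*} [TopologicalSpace M] (ψ : ℝ → M → M)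
    (hcont : Continuous fun q : ℝ × M => ψ q.1 q.2)
    (hadd : ∀ s t x, ψ (s + t) x = ψ s (ψ t x))
    (g : M → ℝ) (hg : Continuous g) (hg01 : ∀ x, g x ∈ Set.Icc (0 : ℝ) 1)
    (ℓ : ℝ)
    (hgate : ∀ x, 0 < g x → g x < 1 → ∀ t : ℝ, ℓ < |t| →
      g (ψ t x) = 0 ∨ g (ψ t x) = 1) (x : M) :
    ∃ i j : ℝ, (i = 0 ∨ i = 1) ∧ (j = 0 ∨ j = 1) ∧ x ∈ Xset ψ g i j ∧
      ∃ t0 : ℝ, (∀ t, t < t0 - ℓ → g (ψ t x) = i) ∧ (∀ t, t0 + ℓ < t → g (ψ t x) = j) := by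
  set f : ℝ → ℝ := fun t => g (ψ t x) with hf
  have hfc : Continuous f := hg.comp (hcont.comp (continuous_id.prodMk continuous_const))
  by_cases hall : ∀ t : ℝ, f t = 0 ∨ f t = 1
  · rcases ray_const hfc Set.ordConnected_univ (fun t _ => hall t) with h | h
    · refine ⟨0, 0, Or.inl rfl, Or.inl rfl, ⟨?_, ?_⟩, 0, ?_, ?_⟩
      · exact tendsto_const_nhds.congr (fun t => (h t trivial).symm)
      · exact tendsto_const_nhds.congr (fun t => (h t trivial).symm)
      · exact fun t _ => h t trivial
      · exact fun t _ => h t trivial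
    · refine ⟨1, 1, Or.inr rfl, Or.inr rfl, ⟨?_, ?_⟩, 0, ?_, ?_⟩
      · exact tendsto_const_nhds.congr (fun t => (h t trivial).symm)
      · exact tendsto_const_nhds.congr (fun t => (h t trivial).symm)
      · exact fun t _ => h t trivial
      · exact fun t _ => h t trivial
  · push_neg at hall
    obtain ⟨t0, h0, h1⟩ := hall
    have hmem := hg01 (ψ t0 x)
    have hpos : 0 < f t0 := lt_of_le_of_ne hmem.1 (Ne.symm h0)
    have hlt1 : f t0 < 1 := lt_of_le_of_ne hmem.2 h1
    have hout : ∀ t : ℝ, ℓ < |t - t0| → f t = 0 ∨ f t = 1 := by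
      intro t ht
      have := hgate (ψ t0 x) hpos hlt1 (t - t0) ht
      rwa [← hadd, sub_add_cancel] at this
    have hr := ray_const hfc (s := Set.Ioi (t0 + ℓ)) Set.ordConnected_Ioi
      (fun t ht => hout t (lt_of_lt_of_le (show ℓ < t - t0 by simp at ht; linarith) (le_abs_self _)))
    have hl := ray_const hfc (s := Set.Iio (t0 - ℓ)) Set.ordConnected_Iio
      (fun t ht => hout t (by rw [abs_sub_comm]; exact lt_of_lt_of_le (show ℓ < t0 - t by simp at ht; linarith) (le_abs_self _)))
    rcases hr with hr | hr <;> rcases hl with hl | hl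
    · refine ⟨0, 0, Or.inl rfl, Or.inl rfl, ⟨?_, ?_⟩, t0, fun t ht => hl t ht, fun t ht => hr t ht⟩
      · refine tendsto_const_nhds.congr' ?_
        filter_upwards [eventually_lt_atBot (t0 - ℓ)] with t ht using (hl t ht).symm
      · refine tendsto_const_nhds.congr' ?_
        filter_upwards [eventually_gt_atTop (t0 + ℓ)] with t ht using (hr t ht).symm
    · refine ⟨1, 0, Or.inr rfl, Or.inl rfl, ⟨?_, ?_⟩, t0, fun t ht => hl t ht, fun t ht => hr t ht⟩
      · refine tendsto_const_nhds.congr' ?_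
        filter_upwards [eventually_lt_atBot (t0 - ℓ)] with t ht using (hl t ht).symm
      · refine tendsto_const_nhds.congr' ?_
        filter_upwards [eventually_gt_atTop (t0 + ℓ)] with t ht using (hr t ht).symm
    · refine ⟨0, 1, Or.inl rfl, Or.inr rfl, ⟨?_, ?_⟩, t0, fun t ht => hl t ht, fun t ht => hr t ht⟩
      · refine tendsto_const_nhds.congr' ?_
        filter_upwards [eventually_lt_atBot (t0 - ℓ)] with t ht using (hl t ht).symm
      · refine tendsto_const_nhds.congr' ?_
        filter_upwards [eventually_gt_atTop (t0 + ℓ)] with t ht using (hr t ht).symm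
    · refine ⟨1, 1, Or.inr rfl, Or.inr rfl, ⟨?_, ?_⟩, t0, fun t ht => hl t ht, fun t ht => hr t ht⟩
      · refine tendsto_const_nhds.congr' ?_
        filter_upwards [eventually_lt_atBot (t0 - ℓ)] with t ht using (hl t ht).symm
      · refine tendsto_const_nhds.congr' ?_
        filter_upwards [eventually_gt_atTop (t0 + ℓ)] with t ht using (hr t ht).symm


-- pointwise support bound ⇒ integral bound
lemma integral_ind_le (ℓ t0 T : ℝ) (hℓ : 0 < ℓ) (hT : 0 < T) :
    ∫ t in (-T)..T, (Set.Icc (t0 - ℓ) (t0 + ℓ)).indicator (fun _ => (1:ℝ)) t ≤ 2 * ℓ := by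
  have hint : Integrable ((Set.Icc (t0 - ℓ) (t0 + ℓ)).indicator (fun _ => (1:ℝ))) := by
    rw [integrable_indicator_iff measurableSet_Icc]
    exact integrableOn_const measure_Icc_lt_top.ne
  rw [intervalIntegral.integral_of_le (by linarith)]
  have h1 : ∫ t in Set.Ioc (-T) T, (Set.Icc (t0 - ℓ) (t0 + ℓ)).indicator (fun _ => (1:ℝ)) t
      ≤ ∫ t, (Set.Icc (t0 - ℓ) (t0 + ℓ)).indicator (fun _ => (1:ℝ)) t :=
    setIntegral_le_integral hint
      (ae_of_all _ fun t => Set.indicator_nonneg (fun _ _ => zero_le_one) t)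
  have h2 : ∫ t, (Set.Icc (t0 - ℓ) (t0 + ℓ)).indicator (fun _ => (1:ℝ)) t = 2 * ℓ := by
    rw [integral_indicator_const _ measurableSet_Icc]
    simp [Real.volume_Icc]
    rw [max_eq_left (by linarith)]
    ring
  linarith

lemma bound00 {f : ℝ → ℝ} (hfc : Continuous f) (hf01 : ∀ t, f t ∈ Set.Icc (0:ℝ) 1)
    (ℓ t0 T : ℝ) (hℓ : 0 < ℓ) (hT : 0 < T)
    (hl : ∀ t, t < t0 - ℓ → f t = 0) (hr : ∀ t, t0 + ℓ < t → f t = 0) :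
    ∫ t in (-T)..T, f t ≤ 2 * ℓ := by
  have hint : Integrable ((Set.Icc (t0 - ℓ) (t0 + ℓ)).indicator (fun _ => (1:ℝ))) := by
    rw [integrable_indicator_iff measurableSet_Icc]
    exact integrableOn_const measure_Icc_lt_top.ne
  have hle : ∀ t, f t ≤ (Set.Icc (t0 - ℓ) (t0 + ℓ)).indicator (fun _ => (1:ℝ)) t := by
    intro t
    by_cases ht : t ∈ Set.Icc (t0 - ℓ) (t0 + ℓ)
    · rw [Set.indicator_of_mem ht]; exact (hf01 t).2
    · rw [Set.indicator_of_notMem ht]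
      rw [Set.mem_Icc, not_and_or, not_le, not_le] at ht
      rcases ht with ht | ht
      · exact le_of_eq (hl t (by linarith))
      · exact le_of_eq (hr t ht)
  have h1 : ∫ t in (-T)..T, f t
      ≤ ∫ t in (-T)..T, (Set.Icc (t0 - ℓ) (t0 + ℓ)).indicator (fun _ => (1:ℝ)) t :=
    intervalIntegral.integral_mono_on (by linarith) (hfc.intervalIntegrable _ _)
      hint.intervalIntegrable (fun t _ => hle t)
  linarith [integral_ind_le ℓ t0 T hℓ hT]

lemma bound11 {f : ℝ → ℝ} (hfc : Continuous f) (hf01 : ∀ t, f t ∈ Set.Icc (0:ℝ) 1)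
    (ℓ t0 T : ℝ) (hℓ : 0 < ℓ) (hT : 0 < T)
    (hl : ∀ t, t < t0 - ℓ → f t = 1) (hr : ∀ t, t0 + ℓ < t → f t = 1) :
    2 * T - 2 * ℓ ≤ ∫ t in (-T)..T, f t := by
  have hint : Integrable ((Set.Icc (t0 - ℓ) (t0 + ℓ)).indicator (fun _ => (1:ℝ))) := by
    rw [integrable_indicator_iff measurableSet_Icc]
    exact integrableOn_const measure_Icc_lt_top.ne
  have hle : ∀ t, (1 : ℝ) - (Set.Icc (t0 - ℓ) (t0 + ℓ)).indicator (fun _ => (1:ℝ)) t ≤ f t := by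
    intro t
    by_cases ht : t ∈ Set.Icc (t0 - ℓ) (t0 + ℓ)
    · rw [Set.indicator_of_mem ht]; simpa using (hf01 t).1
    · rw [Set.indicator_of_notMem ht]
      rw [Set.mem_Icc, not_and_or, not_le, not_le] at ht
      rcases ht with ht | ht
      · simpa using le_of_eq (hl t (by linarith)).symm
      · simpa using le_of_eq (hr t ht).symm
  have h1 : ∫ t in (-T)..T, ((1:ℝ) - (Set.Icc (t0 - ℓ) (t0 + ℓ)).indicator (fun _ => (1:ℝ)) t)
      ≤ ∫ t in (-T)..T, f t :=
    intervalIntegral.integral_mono_on (by linarith)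
      (intervalIntegrable_const.sub hint.intervalIntegrable)
      (hfc.intervalIntegrable _ _) (fun t _ => hle t)
  have h2 : ∫ t in (-T)..T, ((1:ℝ) - (Set.Icc (t0 - ℓ) (t0 + ℓ)).indicator (fun _ => (1:ℝ)) t)
      = (2 * T) - ∫ t in (-T)..T, (Set.Icc (t0 - ℓ) (t0 + ℓ)).indicator (fun _ => (1:ℝ)) t := by
    rw [intervalIntegral.integral_sub intervalIntegrable_const hint.intervalIntegrable]
    rw [intervalIntegral.integral_const]
    norm_num
    ring
  linarith [integral_ind_le ℓ t0 T hℓ hT]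


lemma contG {M : Type*} [TopologicalSpace M] (ψ : ℝ → M → M)
    (hcont : Continuous fun q : ℝ × M => ψ q.1 q.2)
    (g : M → ℝ) (hg : Continuous g) (T : ℝ) (hT : 0 < T) :
    Continuous fun x : M => ∫ t in (-T)..T, g (ψ t x) := by
  have hF : Continuous fun q : ℝ × M => g (ψ q.1 q.2) := hg.comp hcont
  rw [continuous_iff_continuousAt]
  intro x0
  rw [ContinuousAt, Metric.tendsto_nhds]
  intro ε hε
  set ε' : ℝ := ε / (2 * T + 1) with hε'def
  have hε' : 0 < ε' := div_pos hε (by linarith)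
  set N : Set (ℝ × M) := {q | |g (ψ q.1 q.2) - g (ψ q.1 x0)| < ε'} with hNdef
  have hNopen : IsOpen N := by
    have h2 : Continuous fun q : ℝ × M => g (ψ q.1 x0) :=
      hF.comp (continuous_fst.prodMk continuous_const)
    exact isOpen_lt ((hF.sub h2).abs) continuous_const
  have hsub : Set.Icc (-T) T ×ˢ ({x0} : Set M) ⊆ N := by
    rintro ⟨t, x⟩ ⟨-, hx⟩
    simp only [Set.mem_singleton_iff] at hx
    subst hx
    simp [hNdef, hε']
  obtain ⟨u, v, hu, hv, hsu, hsv, huv⟩ :=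
    generalized_tube_lemma isCompact_Icc isCompact_singleton hNopen hsub
  filter_upwards [hv.mem_nhds (hsv rfl)] with x hx
  rw [Real.dist_eq]
  have hfx : Continuous fun t : ℝ => g (ψ t x) :=
    hF.comp (continuous_id.prodMk continuous_const)
  have hfx0 : Continuous fun t : ℝ => g (ψ t x0) :=
    hF.comp (continuous_id.prodMk continuous_const)
  have heq : (∫ t in (-T)..T, g (ψ t x)) - ∫ t in (-T)..T, g (ψ t x0)
      = ∫ t in (-T)..T, (g (ψ t x) - g (ψ t x0)) :=
    (intervalIntegral.integral_sub (hfx.intervalIntegrable _ _)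
      (hfx0.intervalIntegrable _ _)).symm
  rw [heq]
  have hbd : ∀ t ∈ Set.uIoc (-T) T, ‖g (ψ t x) - g (ψ t x0)‖ ≤ ε' := by
    intro t ht
    rw [Set.uIoc_of_le (by linarith)] at ht
    have htI : t ∈ Set.Icc (-T) T := ⟨le_of_lt ht.1, ht.2⟩
    have : (t, x) ∈ N := huv ⟨hsu htI, hx⟩
    rw [Real.norm_eq_abs]
    exact le_of_lt this
  have := intervalIntegral.norm_integral_le_of_norm_le_const hbd
  rw [Real.norm_eq_abs] at this
  have h2T : |T - (-T)| = 2 * T := by rw [abs_of_pos (by linarith)]; ring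
  rw [h2T] at this
  calc |∫ t in (-T)..T, (g (ψ t x) - g (ψ t x0))| ≤ ε' * (2 * T) := this
    _ < ε' * (2 * T + 1) := by nlinarith
    _ = ε := by rw [hε'def]; field_simp

/-- if `M` is connected and both `X_{0,0}` and `X_{1,1}` are
nonempty, then at least one of `X_{0,1}` or `X_{1,0}` is nonempty. -/
theorem stmt_3
    {M : Type*} [TopologicalSpace M] (ψ : ℝ → M → M)
    (hcont : Continuous fun q : ℝ × M => ψ q.1 q.2)
    (hzero : ∀ x, ψ 0 x = x)
    (hadd : ∀ s t x, ψ (s + t) x = ψ s (ψ t x))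
    (g : M → ℝ) (hg : Continuous g) (hg01 : ∀ x, g x ∈ Set.Icc (0 : ℝ) 1)
    (ℓ : ℝ) (hℓ : 0 < ℓ)
    (hgate : ∀ x, 0 < g x → g x < 1 → ∀ t : ℝ, ℓ < |t| →
      g (ψ t x) = 0 ∨ g (ψ t x) = 1)
    (hconn : ConnectedSpace M)
    (h00 : (Xset ψ g 0 0).Nonempty) (h11 : (Xset ψ g 1 1).Nonempty) :
    (Xset ψ g 0 1).Nonempty ∨ (Xset ψ g 1 0).Nonempty := by
  by_contra hcon
  push_neg at hcon
  obtain ⟨h01, h10⟩ := hcon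
  have hclass : ∀ x : M, (x ∈ Xset ψ g 0 0 ∧
        ∫ t in (-(3*ℓ))..(3*ℓ), g (ψ t x) ≤ 2 * ℓ) ∨
      (x ∈ Xset ψ g 1 1 ∧ 4 * ℓ ≤ ∫ t in (-(3*ℓ))..(3*ℓ), g (ψ t x)) := by
    intro x
    obtain ⟨i, j, hi, hj, hmem, t0, hl, hr⟩ :=
      orbit_struct ψ hcont hadd g hg hg01 ℓ hgate x
    have hfc : Continuous fun t : ℝ => g (ψ t x) :=
      hg.comp ((hcont.comp (continuous_id.prodMk continuous_const)))
    have hf01 : ∀ t : ℝ, g (ψ t x) ∈ Set.Icc (0:ℝ) 1 := fun t => hg01 _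
    rcases hi with rfl | rfl <;> rcases hj with rfl | rfl
    · left
      refine ⟨hmem, bound00 hfc hf01 ℓ t0 (3*ℓ) hℓ (by linarith) hl hr⟩
    · exact absurd hmem (by rw [h01]; exact Set.notMem_empty x)
    · exact absurd hmem (by rw [h10]; exact Set.notMem_empty x)
    · right
      refine ⟨hmem, ?_⟩
      have := bound11 hfc hf01 ℓ t0 (3*ℓ) hℓ (by linarith) hl hr
      linarith
  obtain ⟨a, ha⟩ := h00
  obtain ⟨b, hb⟩ := h11
  have hGcont : Continuous fun x : M => ∫ t in (-(3*ℓ))..(3*ℓ), g (ψ t x) :=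
    contG ψ hcont g hg (3*ℓ) (by linarith)
  have hGa : (∫ t in (-(3*ℓ))..(3*ℓ), g (ψ t a)) ≤ 2 * ℓ := by
    rcases hclass a with ⟨_, h⟩ | ⟨hmem, _⟩
    · exact h
    · exfalso
      have := tendsto_nhds_unique ha.2 hmem.2
      norm_num at this
  have hGb : 4 * ℓ ≤ ∫ t in (-(3*ℓ))..(3*ℓ), g (ψ t b) := by
    rcases hclass b with ⟨hmem, _⟩ | ⟨_, h⟩
    · exfalso
      have := tendsto_nhds_unique hb.2 hmem.2
      norm_num at this
    · exact h
  have hmid : (3*ℓ : ℝ) ∈ Set.Icc (∫ t in (-(3*ℓ))..(3*ℓ), g (ψ t a))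
      (∫ t in (-(3*ℓ))..(3*ℓ), g (ψ t b)) := ⟨by linarith, by linarith⟩
  obtain ⟨c, hc⟩ := intermediate_value_univ a b hGcont hmid
  simp only [] at hc
  rcases hclass c with ⟨_, h⟩ | ⟨_, h⟩ <;> rw [hc] at h <;> linarith
end

section
/- The subsets X_{0,1}, X_{1,0}, U_{0,0}, and U_{1,1} are open in M. -/
open Filter Topology

private lemma flow_key
    {M : Type*} [TopologicalSpace M] {ψ : ℝ → M → M}
    (hcont : Continuous fun q : ℝ × M => ψ q.1 q.2)
    (hadd : ∀ s t x, ψ (s + t) x = ψ s (ψ t x))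
    {g : M → ℝ} (hg : Continuous g)
    {ℓ : ℝ} (hℓ : 0 < ℓ)
    (hgate : ∀ x, 0 < g x → g x < 1 → ∀ t : ℝ, ℓ < |t| →
      g (ψ t x) = 0 ∨ g (ψ t x) = 1)
    (x : M) (t0 : ℝ) (hmid : g (ψ t0 x) ∈ Set.Ioo (0:ℝ) 1) :
    Tendsto (fun t => g (ψ t x)) atBot (nhds (g (ψ (t0 - (ℓ+1)) x))) ∧
    Tendsto (fun t => g (ψ t x)) atTop (nhds (g (ψ (t0 + (ℓ+1)) x))) ∧
    (g (ψ (t0 - (ℓ+1)) x) = 0 ∨ g (ψ (t0 - (ℓ+1)) x) = 1) ∧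
    (g (ψ (t0 + (ℓ+1)) x) = 0 ∨ g (ψ (t0 + (ℓ+1)) x) = 1) := by
  obtain ⟨h0, h1⟩ := hmid
  set y := ψ t0 x with hy
  have hco : ∀ s : ℝ, g (ψ s y) = g (ψ (s + t0) x) := fun s => by rw [hy, ← hadd]
  have hk : Continuous fun u : ℝ => g (ψ u y) :=
    hg.comp (hcont.comp (continuous_id.prodMk continuous_const))
  have same : ∀ s₁ s₂ : ℝ, (∀ c ∈ Set.uIcc s₁ s₂, ℓ < |c|) →
      g (ψ s₁ y) = g (ψ s₂ y) := by
    intro s₁ s₂ hc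
    by_contra hne
    have hmem : (1/2 : ℝ) ∈ Set.uIcc (g (ψ s₁ y)) (g (ψ s₂ y)) := by
      rcases hgate y h0 h1 s₁ (hc s₁ Set.left_mem_uIcc) with e1 | e1 <;>
        rcases hgate y h0 h1 s₂ (hc s₂ Set.right_mem_uIcc) with e2 | e2 <;>
        rw [e1, e2] at hne ⊢ <;>
        first
          | exact absurd rfl hne
          | (rw [Set.mem_uIcc]; norm_num)
    obtain ⟨c, hcmem, hcval⟩ := intermediate_value_uIcc hk.continuousOn hmem
    have hcval' : g (ψ c y) = 1/2 := hcval
    rcases hgate y h0 h1 c (hc c hcmem) with e | e <;> rw [hcval'] at e <;> norm_num at e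
  have vT : g (ψ (t0 + (ℓ+1)) x) = 0 ∨ g (ψ (t0 + (ℓ+1)) x) = 1 := by
    have := hgate y h0 h1 (ℓ+1) (by rw [abs_of_pos (by linarith)]; linarith)
    rwa [hco, add_comm] at this
  have vB : g (ψ (t0 - (ℓ+1)) x) = 0 ∨ g (ψ (t0 - (ℓ+1)) x) = 1 := by
    have := hgate y h0 h1 (-(ℓ+1)) (by rw [abs_neg, abs_of_pos (by linarith)]; linarith)
    rwa [hco, neg_add_eq_sub] at this
  have tT : Tendsto (fun t => g (ψ t x)) atTop (nhds (g (ψ (t0 + (ℓ+1)) x))) := by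
    have hev : ∀ᶠ t in atTop, g (ψ t x) = g (ψ (t0 + (ℓ+1)) x) := by
      filter_upwards [eventually_ge_atTop (t0 + (ℓ+1))] with t ht
      have h1' : g (ψ t x) = g (ψ (t - t0) y) := by rw [hco, sub_add_cancel]
      have h2' : g (ψ (t0 + (ℓ+1)) x) = g (ψ (ℓ+1) y) := by rw [hco, add_comm]
      rw [h1', h2']
      refine same _ _ fun c hcmem => ?_
      have h3 : ℓ + 1 ≤ t - t0 := by linarith
      rcases Set.mem_uIcc.1 hcmem with ⟨h, _⟩ | ⟨h, _⟩ <;>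
        · have := le_abs_self c; linarith
    exact Tendsto.congr' (by filter_upwards [hev] with t ht; exact ht.symm) tendsto_const_nhds
  have tB : Tendsto (fun t => g (ψ t x)) atBot (nhds (g (ψ (t0 - (ℓ+1)) x))) := by
    have hev : ∀ᶠ t in atBot, g (ψ t x) = g (ψ (t0 - (ℓ+1)) x) := by
      filter_upwards [eventually_le_atBot (t0 - (ℓ+1))] with t ht
      have h1' : g (ψ t x) = g (ψ (t - t0) y) := by rw [hco, sub_add_cancel]
      have h2' : g (ψ (t0 - (ℓ+1)) x) = g (ψ (-(ℓ+1)) y) := by rw [hco, neg_add_eq_sub]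
      rw [h1', h2']
      refine same _ _ fun c hcmem => ?_
      have h3 : t - t0 ≤ -(ℓ+1) := by linarith
      rcases Set.mem_uIcc.1 hcmem with ⟨_, h⟩ | ⟨_, h⟩ <;>
        · have := neg_le_abs c; linarith
    exact Tendsto.congr' (by filter_upwards [hev] with t ht; exact ht.symm) tendsto_const_nhds
  exact ⟨tB, tT, vB, vT⟩

/-- the subsets `X_{0,1}`, `X_{1,0}`, `U_{0,0}`, and
`U_{1,1}` are open in `M`. -/
theorem stmt_4
    {M : Type*} [TopologicalSpace M] (ψ : ℝ → M → M)
    (hcont : Continuous fun q : ℝ × M => ψ q.1 q.2)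
    (hzero : ∀ x, ψ 0 x = x)
    (hadd : ∀ s t x, ψ (s + t) x = ψ s (ψ t x))
    (g : M → ℝ) (hg : Continuous g) (hg01 : ∀ x, g x ∈ Set.Icc (0 : ℝ) 1)
    (ℓ : ℝ) (hℓ : 0 < ℓ)
    (hgate : ∀ x, 0 < g x → g x < 1 → ∀ t : ℝ, ℓ < |t| →
      g (ψ t x) = 0 ∨ g (ψ t x) = 1) :
    IsOpen (Xset ψ g 0 1) ∧ IsOpen (Xset ψ g 1 0) ∧
    IsOpen (U00 ψ g) ∧ IsOpen (U11 ψ g) := by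
  have contk : ∀ x : M, Continuous fun t : ℝ => g (ψ t x) := fun x =>
    hg.comp (hcont.comp (continuous_id.prodMk continuous_const))
  -- openness of the candidate sets
  have hopenset : ∀ (s₁ s₂ : Set ℝ), IsOpen s₁ → IsOpen s₂ → IsOpen
      (⋃ t : ℝ, {x : M | g (ψ t x) ∈ Set.Ioo (0:ℝ) 1 ∧
        g (ψ (t - (ℓ+1)) x) ∈ s₁ ∧ g (ψ (t + (ℓ+1)) x) ∈ s₂}) := by
    intro s₁ s₂ h₁ h₂
    refine isOpen_iUnion fun t => ?_
    have c : ∀ c : ℝ, Continuous fun x : M => g (ψ c x) := fun c =>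
      hg.comp (hcont.comp (continuous_const.prodMk continuous_id))
    exact ((isOpen_Ioo.preimage (c t)).inter
      ((h₁.preimage (c (t - (ℓ+1)))).inter (h₂.preimage (c (t + (ℓ+1))))))
  -- IVT helpers
  have exmidTB : ∀ (x : M) (a b : ℝ), Tendsto (fun t => g (ψ t x)) atBot (nhds a) →
      Tendsto (fun t => g (ψ t x)) atTop (nhds b) → a < 1/2 → 1/2 < b →
      ∃ t, g (ψ t x) ∈ Set.Ioo (0:ℝ) 1 := by
    intro x a b hB hT ha hb
    obtain ⟨A, hA⟩ := eventually_atBot.1 (hB.eventually_lt_const ha)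
    obtain ⟨B, hBB⟩ := eventually_atTop.1 (hT.eventually_const_lt hb)
    have ha' : g (ψ (min A B) x) < 1/2 := hA _ (min_le_left _ _)
    have hb' : 1/2 < g (ψ (max A B) x) := hBB _ (le_max_right _ _)
    obtain ⟨t, _, ht⟩ := intermediate_value_Icc min_le_max (contk x).continuousOn
      (Set.mem_Icc.2 ⟨ha'.le, hb'.le⟩)
    have ht' : g (ψ t x) = 1/2 := ht
    exact ⟨t, by rw [ht']; norm_num, by rw [ht']; norm_num⟩
  -- equality for X01
  have hX01 : Xset ψ g 0 1 = ⋃ t : ℝ, {x : M | g (ψ t x) ∈ Set.Ioo (0:ℝ) 1 ∧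
      g (ψ (t - (ℓ+1)) x) ∈ Set.Iio (1/2 : ℝ) ∧ g (ψ (t + (ℓ+1)) x) ∈ Set.Ioi (1/2 : ℝ)} := by
    ext x
    simp only [Xset, Set.mem_setOf_eq, Set.mem_iUnion, Set.mem_Iio, Set.mem_Ioi]
    constructor
    · rintro ⟨hB, hT⟩
      obtain ⟨t0, hmid⟩ := exmidTB x 0 1 hB hT (by norm_num) (by norm_num)
      obtain ⟨tB, tT, _, _⟩ := flow_key hcont hadd hg hℓ hgate x t0 hmid
      have eB := tendsto_nhds_unique tB hB
      have eT := tendsto_nhds_unique tT hT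
      exact ⟨t0, hmid, by rw [eB]; norm_num, by rw [eT]; norm_num⟩
    · rintro ⟨t0, hmid, hlo, hhi⟩
      obtain ⟨tB, tT, vB, vT⟩ := flow_key hcont hadd hg hℓ hgate x t0 hmid
      have eB : g (ψ (t0 - (ℓ+1)) x) = 0 := by
        rcases vB with h | h
        · exact h
        · rw [h] at hlo; norm_num at hlo
      have eT : g (ψ (t0 + (ℓ+1)) x) = 1 := by
        rcases vT with h | h
        · rw [h] at hhi; norm_num at hhi
        · exact h
      exact ⟨by rwa [eB] at tB, by rwa [eT] at tT⟩
  have hX10 : Xset ψ g 1 0 = ⋃ t : ℝ, {x : M | g (ψ t x) ∈ Set.Ioo (0:ℝ) 1 ∧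
      g (ψ (t - (ℓ+1)) x) ∈ Set.Ioi (1/2 : ℝ) ∧ g (ψ (t + (ℓ+1)) x) ∈ Set.Iio (1/2 : ℝ)} := by
    ext x
    simp only [Xset, Set.mem_setOf_eq, Set.mem_iUnion, Set.mem_Iio, Set.mem_Ioi]
    constructor
    · rintro ⟨hB, hT⟩
      -- reverse roles: tendsto 1 at atBot, 0 at atTop
      obtain ⟨A, hA⟩ := eventually_atBot.1 (hB.eventually_const_lt (by norm_num : (1/2:ℝ) < 1))
      obtain ⟨B, hBB⟩ := eventually_atTop.1 (hT.eventually_lt_const (by norm_num : (0:ℝ) < 1/2))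
      have ha' : 1/2 < g (ψ (min A B) x) := hA _ (min_le_left _ _)
      have hb' : g (ψ (max A B) x) < 1/2 := hBB _ (le_max_right _ _)
      obtain ⟨t0, _, ht⟩ := intermediate_value_Icc' min_le_max (contk x).continuousOn
        (Set.mem_Icc.2 ⟨hb'.le, ha'.le⟩)
      have ht' : g (ψ t0 x) = 1/2 := ht
      have hmid : g (ψ t0 x) ∈ Set.Ioo (0:ℝ) 1 := by rw [ht']; constructor <;> norm_num
      obtain ⟨tB, tT, _, _⟩ := flow_key hcont hadd hg hℓ hgate x t0 hmid
      have eB := tendsto_nhds_unique tB hB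
      have eT := tendsto_nhds_unique tT hT
      exact ⟨t0, hmid, by rw [eB]; norm_num, by rw [eT]; norm_num⟩
    · rintro ⟨t0, hmid, hlo, hhi⟩
      obtain ⟨tB, tT, vB, vT⟩ := flow_key hcont hadd hg hℓ hgate x t0 hmid
      have eB : g (ψ (t0 - (ℓ+1)) x) = 1 := by
        rcases vB with h | h
        · rw [h] at hlo; norm_num at hlo
        · exact h
      have eT : g (ψ (t0 + (ℓ+1)) x) = 0 := by
        rcases vT with h | h
        · exact h
        · rw [h] at hhi; norm_num at hhi
      exact ⟨by rwa [eB] at tB, by rwa [eT] at tT⟩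
  have hU00 : U00 ψ g = ⋃ t : ℝ, {x : M | g (ψ t x) ∈ Set.Ioo (0:ℝ) 1 ∧
      g (ψ (t - (ℓ+1)) x) ∈ Set.Iio (1/2 : ℝ) ∧ g (ψ (t + (ℓ+1)) x) ∈ Set.Iio (1/2 : ℝ)} := by
    ext x
    simp only [U00, Xset, Set.mem_setOf_eq, Set.mem_sep_iff, Set.mem_iUnion, Set.mem_Iio]
    constructor
    · rintro ⟨⟨hB, hT⟩, t₁, hne⟩
      have h0' : 0 < g (ψ t₁ x) := lt_of_le_of_ne (hg01 _).1 (Ne.symm hne)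
      have hmidE : ∃ t, g (ψ t x) ∈ Set.Ioo (0:ℝ) 1 := by
        rcases lt_or_ge (g (ψ t₁ x)) 1 with h | h
        · exact ⟨t₁, h0', h⟩
        · obtain ⟨B, hBB⟩ := eventually_atTop.1 (hT.eventually_lt_const (by norm_num : (0:ℝ) < 1/2))
          have hb' : g (ψ (max B t₁) x) < 1/2 := hBB _ (le_max_left _ _)
          obtain ⟨t, _, ht⟩ := intermediate_value_Icc' (le_max_right B t₁) (contk x).continuousOn
            (Set.mem_Icc.2 ⟨hb'.le, by linarith⟩)
          have ht' : g (ψ t x) = 1/2 := ht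
          exact ⟨t, by rw [ht']; norm_num, by rw [ht']; norm_num⟩
      obtain ⟨t0, hmid⟩ := hmidE
      obtain ⟨tB, tT, _, _⟩ := flow_key hcont hadd hg hℓ hgate x t0 hmid
      have eB := tendsto_nhds_unique tB hB
      have eT := tendsto_nhds_unique tT hT
      exact ⟨t0, hmid, by rw [eB]; norm_num, by rw [eT]; norm_num⟩
    · rintro ⟨t0, hmid, hlo, hhi⟩
      obtain ⟨tB, tT, vB, vT⟩ := flow_key hcont hadd hg hℓ hgate x t0 hmid
      have eB : g (ψ (t0 - (ℓ+1)) x) = 0 := by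
        rcases vB with h | h
        · exact h
        · rw [h] at hlo; norm_num at hlo
      have eT : g (ψ (t0 + (ℓ+1)) x) = 0 := by
        rcases vT with h | h
        · exact h
        · rw [h] at hhi; norm_num at hhi
      exact ⟨⟨by rwa [eB] at tB, by rwa [eT] at tT⟩, t0, ne_of_gt hmid.1⟩
  have hU11 : U11 ψ g = ⋃ t : ℝ, {x : M | g (ψ t x) ∈ Set.Ioo (0:ℝ) 1 ∧
      g (ψ (t - (ℓ+1)) x) ∈ Set.Ioi (1/2 : ℝ) ∧ g (ψ (t + (ℓ+1)) x) ∈ Set.Ioi (1/2 : ℝ)} := by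
    ext x
    simp only [U11, Xset, Set.mem_setOf_eq, Set.mem_sep_iff, Set.mem_iUnion, Set.mem_Ioi]
    constructor
    · rintro ⟨⟨hB, hT⟩, t₁, hne⟩
      have h1' : g (ψ t₁ x) < 1 := lt_of_le_of_ne (hg01 _).2 hne
      have hmidE : ∃ t, g (ψ t x) ∈ Set.Ioo (0:ℝ) 1 := by
        rcases lt_or_ge 0 (g (ψ t₁ x)) with h | h
        · exact ⟨t₁, h, h1'⟩
        · have h0 : g (ψ t₁ x) ≤ 0 := h
          obtain ⟨B, hBB⟩ := eventually_atTop.1 (hT.eventually_const_lt (by norm_num : (1/2:ℝ) < 1))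
          have hb' : 1/2 < g (ψ (max B t₁) x) := hBB _ (le_max_left _ _)
          obtain ⟨t, _, ht⟩ := intermediate_value_Icc (le_max_right B t₁) (contk x).continuousOn
            (Set.mem_Icc.2 ⟨by linarith, hb'.le⟩)
          have ht' : g (ψ t x) = 1/2 := ht
          exact ⟨t, by rw [ht']; norm_num, by rw [ht']; norm_num⟩
      obtain ⟨t0, hmid⟩ := hmidE
      obtain ⟨tB, tT, _, _⟩ := flow_key hcont hadd hg hℓ hgate x t0 hmid
      have eB := tendsto_nhds_unique tB hB
      have eT := tendsto_nhds_unique tT hT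
      exact ⟨t0, hmid, by rw [eB]; norm_num, by rw [eT]; norm_num⟩
    · rintro ⟨t0, hmid, hlo, hhi⟩
      obtain ⟨tB, tT, vB, vT⟩ := flow_key hcont hadd hg hℓ hgate x t0 hmid
      have eB : g (ψ (t0 - (ℓ+1)) x) = 1 := by
        rcases vB with h | h
        · rw [h] at hlo; norm_num at hlo
        · exact h
      have eT : g (ψ (t0 + (ℓ+1)) x) = 1 := by
        rcases vT with h | h
        · rw [h] at hhi; norm_num at hhi
        · exact h
      exact ⟨⟨by rwa [eB] at tB, by rwa [eT] at tT⟩, t0, ne_of_lt hmid.2⟩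
  refine ⟨?_, ?_, ?_, ?_⟩
  · rw [hX01]; exact hopenset _ _ isOpen_Iio isOpen_Ioi
  · rw [hX10]; exact hopenset _ _ isOpen_Ioi isOpen_Iio
  · rw [hU00]; exact hopenset _ _ isOpen_Iio isOpen_Iio
  · rw [hU11]; exact hopenset _ _ isOpen_Ioi isOpen_Ioi
end

section
/- Assume ℓ < 1. Then for every x ∈ X_{0,1} and every integer n ≥ 1, at least one of g(ψ_{−n}(x)) = 0 or g(ψ_n(x)) = 1 holds; consequently 0 ≤ g(ψ_n(x)) − g(ψ_{−n}(x)) ≤ 1. -/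
open Filter Topology

/-- assume `ℓ < 1`.  For every `x ∈ X_{0,1}` and every integer
`n ≥ 1`, at least one of `g(ψ_{−n}(x)) = 0` or `g(ψ_n(x)) = 1` holds;
consequently `0 ≤ g(ψ_n(x)) − g(ψ_{−n}(x)) ≤ 1`. -/
theorem stmt_6
    {M : Type*} [TopologicalSpace M] (ψ : ℝ → M → M)
    (hcont : Continuous fun q : ℝ × M => ψ q.1 q.2)
    (hzero : ∀ x, ψ 0 x = x)
    (hadd : ∀ s t x, ψ (s + t) x = ψ s (ψ t x))
    (g : M → ℝ) (hg : Continuous g) (hg01 : ∀ x, g x ∈ Set.Icc (0 : ℝ) 1)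
    (ℓ : ℝ) (hℓ : 0 < ℓ)
    (hgate : ∀ x, 0 < g x → g x < 1 → ∀ t : ℝ, ℓ < |t| →
      g (ψ t x) = 0 ∨ g (ψ t x) = 1)
    (hℓ1 : ℓ < 1)
    (x : M) (hx : x ∈ Xset ψ g 0 1) (n : ℕ) (hn : 1 ≤ n) :
    (g (ψ (-(n : ℝ)) x) = 0 ∨ g (ψ (n : ℝ) x) = 1) ∧
    0 ≤ g (ψ (n : ℝ) x) - g (ψ (-(n : ℝ)) x) ∧
    g (ψ (n : ℝ) x) - g (ψ (-(n : ℝ)) x) ≤ 1 := by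
  obtain ⟨hbot, htop⟩ := hx
  set f : ℝ → ℝ := fun t => g (ψ t x) with hf
  have hfc : Continuous f := hg.comp (hcont.comp (continuous_id.prodMk continuous_const))
  -- find s with f s = 1/2
  have h0 : ∃ t0, f t0 < 1/2 := (hbot.eventually_lt_const (by norm_num)).exists
  have h1 : ∃ t1, 1/2 < f t1 := (htop.eventually_const_lt (by norm_num)).exists
  obtain ⟨t0, ht0⟩ := h0
  obtain ⟨t1, ht1⟩ := h1
  have hs : ∃ s, f s = 1/2 := by
    have := intermediate_value_univ t0 t1 hfc
    have hm : (1/2 : ℝ) ∈ Set.Icc (f t0) (f t1) := ⟨le_of_lt ht0, le_of_lt ht1⟩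
    exact this hm
  obtain ⟨s, hsval⟩ := hs
  -- gate at the point ψ s x
  have hgate' : ∀ u : ℝ, ℓ < |u - s| → f u = 0 ∨ f u = 1 := by
    intro u hu
    have h2 : g (ψ (u - s) (ψ s x)) = 0 ∨ g (ψ (u - s) (ψ s x)) = 1 := by
      refine hgate (ψ s x) ?_ ?_ (u - s) hu
      · show (0:ℝ) < f s; rw [hsval]; norm_num
      · show f s < 1; rw [hsval]; norm_num
    rwa [← hadd, sub_add_cancel] at h2
  -- Claim A : for t with ℓ < t - s, f t = 1
  have claimA : ∀ t : ℝ, ℓ < t - s → f t = 1 := by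
    intro t ht
    have habs : ℓ < |t - s| := lt_of_lt_of_le ht (le_abs_self _)
    rcases hgate' t habs with h | h
    · exfalso
      obtain ⟨t', ht'1, ht'2⟩ :=
        ((htop.eventually_const_lt (show (1/2:ℝ) < 1 by norm_num)).and
          (eventually_ge_atTop t)).exists
      have hmem : (1/2 : ℝ) ∈ Set.Icc (f t) (f t') := ⟨by rw [h]; norm_num, le_of_lt ht'1⟩
      obtain ⟨u, hu, huv⟩ := intermediate_value_Icc ht'2 hfc.continuousOn hmem
      have huabs : ℓ < |u - s| := by
        have : ℓ < u - s := lt_of_lt_of_le ht (by linarith [hu.1])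
        exact lt_of_lt_of_le this (le_abs_self _)
      rcases hgate' u huabs with h' | h' <;> rw [huv] at h' <;> norm_num at h'
    · exact h
  -- Claim B : for t with t - s < -ℓ, f t = 0
  have claimB : ∀ t : ℝ, t - s < -ℓ → f t = 0 := by
    intro t ht
    have habs : ℓ < |t - s| := by
      rw [abs_sub_comm]; exact lt_of_lt_of_le (by linarith) (le_abs_self _)
    rcases hgate' t habs with h | h
    · exact h
    · exfalso
      obtain ⟨t', ht'1, ht'2⟩ :=
        ((hbot.eventually_lt_const (show (0:ℝ) < 1/2 by norm_num)).and
          (eventually_le_atBot t)).exists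
      have hmem : (1/2 : ℝ) ∈ Set.Icc (f t') (f t) := ⟨le_of_lt ht'1, by rw [h]; norm_num⟩
      obtain ⟨u, hu, huv⟩ := intermediate_value_Icc ht'2 hfc.continuousOn hmem
      have huabs : ℓ < |u - s| := by
        rw [abs_sub_comm]
        have : u - s < -ℓ := lt_of_le_of_lt (by linarith [hu.2]) ht
        exact lt_of_lt_of_le (by linarith) (le_abs_self _)
      rcases hgate' u huabs with h' | h' <;> rw [huv] at h' <;> norm_num at h'
  have hn1 : (1:ℝ) ≤ (n:ℝ) := by exact_mod_cast hn
  have main : g (ψ (-(n : ℝ)) x) = 0 ∨ g (ψ (n : ℝ) x) = 1 := by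
    by_cases hcase : ℓ < (n:ℝ) - s
    · exact Or.inr (claimA (n:ℝ) hcase)
    · push_neg at hcase
      refine Or.inl (claimB (-(n:ℝ)) ?_)
      have : (-(n:ℝ)) - s = ((n:ℝ) - s) - 2*(n:ℝ) := by ring
      rw [this]; linarith
  refine ⟨main, ?_, ?_⟩ <;>
    obtain ⟨ha1, ha2⟩ := hg01 (ψ (-(n:ℝ)) x) <;>
    obtain ⟨hb1, hb2⟩ := hg01 (ψ ((n:ℝ)) x) <;>
    rcases main with h | h <;>
    · rw [h]; linarith
end

section
/- Assume ℓ < 1. Then for every x ∈ X_{0,1} there is an integer N such that for all integers n ≥ N, both g(ψ_{−n}(x)) = 0 and g(ψ_n(x)) = 1 hold; in particular g(ψ_n(x)) − g(ψ_{−n}(x)) = 1 for all n ≥ N. -/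
open Filter Topology

/-- assume `ℓ < 1`.  For every `x ∈ X_{0,1}` there is an integer
`N` such that for all integers `n ≥ N` both `g(ψ_{−n}(x)) = 0` and
`g(ψ_n(x)) = 1` hold; in particular `g(ψ_n(x)) − g(ψ_{−n}(x)) = 1` for all
`n ≥ N`. -/
theorem stmt_7
    {M : Type*} [TopologicalSpace M] (ψ : ℝ → M → M)
    (hcont : Continuous fun q : ℝ × M => ψ q.1 q.2)
    (hzero : ∀ x, ψ 0 x = x)
    (hadd : ∀ s t x, ψ (s + t) x = ψ s (ψ t x))
    (g : M → ℝ) (hg : Continuous g) (hg01 : ∀ x, g x ∈ Set.Icc (0 : ℝ) 1)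
    (ℓ : ℝ) (hℓ : 0 < ℓ)
    (hgate : ∀ x, 0 < g x → g x < 1 → ∀ t : ℝ, ℓ < |t| →
      g (ψ t x) = 0 ∨ g (ψ t x) = 1)
    (hℓ1 : ℓ < 1)
    (x : M) (hx : x ∈ Xset ψ g 0 1) :
    ∃ N : ℕ, ∀ n : ℕ, N ≤ n →
      g (ψ (-(n : ℝ)) x) = 0 ∧ g (ψ (n : ℝ) x) = 1 ∧
      g (ψ (n : ℝ) x) - g (ψ (-(n : ℝ)) x) = 1 := by
  obtain ⟨hbot, htop⟩ := hx
  have h1 : ∀ᶠ t : ℝ in atTop, (1/2 : ℝ) < g (ψ t x) :=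
    htop.eventually (eventually_gt_nhds (by norm_num))
  have h0 : ∀ᶠ t : ℝ in atBot, g (ψ t x) < (1/2 : ℝ) :=
    hbot.eventually (eventually_lt_nhds (by norm_num))
  obtain ⟨T1, hT1⟩ := eventually_atTop.mp h1
  obtain ⟨T0, hT0⟩ := eventually_atBot.mp h0
  by_cases hs : ∃ s : ℝ, 0 < g (ψ s x) ∧ g (ψ s x) < 1
  · obtain ⟨s, hs1, hs2⟩ := hs
    obtain ⟨N, hN⟩ := exists_nat_ge (max (max (|s| + ℓ + 1) T1) (-T0))
    refine ⟨N, fun n hn => ?_⟩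
    have hnR : max (max (|s| + ℓ + 1) T1) (-T0) ≤ (n : ℝ) :=
      hN.trans (Nat.cast_le.mpr hn)
    have hA : |s| + ℓ + 1 ≤ (n : ℝ) :=
      le_trans (le_trans (le_max_left _ _) (le_max_left _ _)) hnR
    have hB : T1 ≤ (n : ℝ) :=
      le_trans (le_trans (le_max_right _ _) (le_max_left _ _)) hnR
    have hC : -T0 ≤ (n : ℝ) := le_trans (le_max_right _ _) hnR
    have hsabs : s ≤ |s| := le_abs_self s
    have hsabs' : -|s| ≤ s := neg_abs_le s
    have e1 : ψ (n : ℝ) x = ψ ((n : ℝ) - s) (ψ s x) := by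
      have := hadd ((n : ℝ) - s) s x
      rwa [show (n : ℝ) - s + s = (n : ℝ) by ring] at this
    have e0 : ψ (-(n : ℝ)) x = ψ (-(n : ℝ) - s) (ψ s x) := by
      have := hadd (-(n : ℝ) - s) s x
      rwa [show -(n : ℝ) - s + s = -(n : ℝ) by ring] at this
    have habs1 : ℓ < |(n : ℝ) - s| := by
      have : ℓ < (n : ℝ) - s := by linarith
      exact lt_of_lt_of_le this (le_abs_self _)
    have habs0 : ℓ < |-(n : ℝ) - s| := by
      have : ℓ < -(-(n : ℝ) - s) := by linarith
      exact lt_of_lt_of_le this (neg_le_abs _)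
    have hpos : g (ψ (n : ℝ) x) = 1 := by
      have hmem := hgate (ψ s x) hs1 hs2 ((n : ℝ) - s) habs1
      rw [← e1] at hmem
      have hlt := hT1 (n : ℝ) hB
      rcases hmem with h | h
      · linarith
      · exact h
    have hneg : g (ψ (-(n : ℝ)) x) = 0 := by
      have hmem := hgate (ψ s x) hs1 hs2 (-(n : ℝ) - s) habs0
      rw [← e0] at hmem
      have hlt := hT0 (-(n : ℝ)) (by linarith)
      rcases hmem with h | h
      · exact h
      · linarith
    exact ⟨hneg, hpos, by rw [hpos, hneg]; ring⟩
  · push_neg at hs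
    have hval : ∀ t : ℝ, g (ψ t x) = 0 ∨ g (ψ t x) = 1 := by
      intro t
      rcases lt_or_ge 0 (g (ψ t x)) with h | h
      · exact Or.inr (le_antisymm (hg01 _).2 (hs t h))
      · exact Or.inl (le_antisymm h (hg01 _).1)
    obtain ⟨N, hN⟩ := exists_nat_ge (max T1 (-T0))
    refine ⟨N, fun n hn => ?_⟩
    have hnR : max T1 (-T0) ≤ (n : ℝ) := hN.trans (Nat.cast_le.mpr hn)
    have hB : T1 ≤ (n : ℝ) := le_trans (le_max_left _ _) hnR
    have hC : -T0 ≤ (n : ℝ) := le_trans (le_max_right _ _) hnR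
    have hpos : g (ψ (n : ℝ) x) = 1 := by
      have hlt := hT1 (n : ℝ) hB
      rcases hval (n : ℝ) with h | h
      · linarith
      · exact h
    have hneg : g (ψ (-(n : ℝ)) x) = 0 := by
      have hlt := hT0 (-(n : ℝ)) (by linarith)
      rcases hval (-(n : ℝ)) with h | h
      · exact h
      · linarith
    exact ⟨hneg, hpos, by rw [hpos, hneg]; ring⟩
end

section
/- Assume ℓ < 1. Then for every x ∈ X_{0,1}, lim_{t→−∞} p(ψ_t(x)) = 0 and lim_{t→+∞} p(ψ_t(x)) = 1. -/
open Filter Topology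

/-- Auxiliary: convergence of sliding averages. -/
lemma avg_aux (f : ℝ → ℝ) (hf : Continuous f) (n : ℝ) (hn : 0 < n) (c : ℝ) (F : Filter ℝ)
    (h : ∀ ε > 0, ∀ᶠ t in F, ∀ u ∈ Set.Icc (-n + t) (n + t), |f u - c| ≤ ε) :
    Tendsto (fun t => (1 / (2 * n)) * ∫ s in (-n + t)..(n + t), f s) F (nhds c) := by
  rw [Metric.tendsto_nhds]
  intro ε hε
  filter_upwards [h (ε / 2) (by positivity)] with t ht
  have hle : (-n + t) ≤ (n + t) := by linarith
  have hint : IntervalIntegrable f MeasureTheory.volume (-n + t) (n + t) :=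
    hf.intervalIntegrable _ _
  have hsub : (∫ s in (-n + t)..(n + t), f s - c)
      = (∫ s in (-n + t)..(n + t), f s) - (2 * n) * c := by
    rw [intervalIntegral.integral_sub hint (intervalIntegrable_const)]
    rw [intervalIntegral.integral_const, smul_eq_mul]
    ring_nf
  have hbound : ‖∫ s in (-n + t)..(n + t), f s - c‖ ≤ (ε / 2) * |(n + t) - (-n + t)| := by
    apply intervalIntegral.norm_integral_le_of_norm_le_const
    intro u hu
    have : u ∈ Set.Icc (-n + t) (n + t) := Set.Ioc_subset_Icc_self (by
      rwa [Set.uIoc_of_le hle] at hu)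
    simpa [Real.norm_eq_abs] using ht u this
  have habs : |(n + t) - (-n + t)| = 2 * n := by
    rw [abs_of_nonneg (by linarith)]; ring
  rw [Real.dist_eq]
  have heq : (1 / (2 * n) * ∫ s in (-n + t)..(n + t), f s) - c
      = (1 / (2 * n)) * ((∫ s in (-n + t)..(n + t), f s) - 2 * n * c) := by
    rw [mul_sub]
    congr 1
    field_simp
  rw [heq, abs_mul, abs_of_nonneg (by positivity : (0:ℝ) ≤ 1 / (2 * n))]
  have h2 : |(∫ s in (-n + t)..(n + t), f s) - 2 * n * c| ≤ ε / 2 * (2 * n) := by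
    rw [← hsub]
    rw [habs] at hbound
    simpa [Real.norm_eq_abs] using hbound
  calc (1 / (2 * n)) * |(∫ s in (-n + t)..(n + t), f s) - 2 * n * c|
      ≤ (1 / (2 * n)) * (ε / 2 * (2 * n)) := mul_le_mul_of_nonneg_left h2 (by positivity)
    _ = ε / 2 := by field_simp
    _ < ε := by linarith

/-- assume `ℓ < 1`.  For every `x ∈ X_{0,1}`,
`p(ψ_t(x)) → 0` as `t → −∞` and `p(ψ_t(x)) → 1` as `t → +∞`. -/
theorem stmt_9
    {M : Type*} [TopologicalSpace M] (ψ : ℝ → M → M)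
    (hcont : Continuous fun q : ℝ × M => ψ q.1 q.2)
    (hzero : ∀ x, ψ 0 x = x)
    (hadd : ∀ s t x, ψ (s + t) x = ψ s (ψ t x))
    (g : M → ℝ) (hg : Continuous g) (hg01 : ∀ x, g x ∈ Set.Icc (0 : ℝ) 1)
    (ℓ : ℝ) (hℓ : 0 < ℓ)
    (hgate : ∀ x, 0 < g x → g x < 1 → ∀ t : ℝ, ℓ < |t| →
      g (ψ t x) = 0 ∨ g (ψ t x) = 1)
    (hℓ1 : ℓ < 1)
    (x : M) (hx : x ∈ Xset ψ g 0 1) :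
    Filter.Tendsto (fun t => pFun ψ g (ψ t x)) Filter.atBot (nhds 0) ∧
    Filter.Tendsto (fun t => pFun ψ g (ψ t x)) Filter.atTop (nhds 1) := by
  set f : ℝ → ℝ := fun u => g (ψ u x) with hf_def
  have hf : Continuous f := hg.comp (hcont.comp (continuous_id.prodMk continuous_const))
  -- rewrite gAvg along the flow as a sliding average of f
  have hgav : ∀ (m : ℕ) (t : ℝ), gAvg ψ g m (ψ t x)
      = (1 / (2 * (m : ℝ))) * ∫ s in (-(m : ℝ) + t)..((m : ℝ) + t), f s := by
    intro m t
    unfold gAvg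
    congr 1
    have : ∀ s : ℝ, g (ψ s (ψ t x)) = f (s + t) := by
      intro s; rw [hf_def]; simp only [← hadd]
    simp_rw [this]
    exact intervalIntegral.integral_comp_add_right f t
  -- dominated convergence setup
  have hbound : ∀ (k : ℕ) (t : ℝ),
      ‖(1 / 2 : ℝ) ^ (k + 1) * gAvg ψ g (k + 1) (ψ t x)‖ ≤ (1 / 2 : ℝ) ^ (k + 1) := by
    intro k t
    rw [norm_mul]
    have h2 : ‖gAvg ψ g (k + 1) (ψ t x)‖ ≤ 1 := by
      rw [hgav]
      set m : ℝ := ((k + 1 : ℕ) : ℝ) with hm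
      have hmpos : (0:ℝ) < m := by positivity
      rw [norm_mul]
      have : ‖∫ s in (-m + t)..(m + t), f s‖ ≤ 1 * |(m + t) - (-m + t)| := by
        apply intervalIntegral.norm_integral_le_of_norm_le_const
        intro u _
        have := hg01 (ψ u x)
        rw [Real.norm_eq_abs, abs_le]
        constructor <;> [linarith [this.1]; exact this.2]
      have habs : |(m + t) - (-m + t)| = 2 * m := by
        rw [abs_of_nonneg (by linarith)]; ring
      rw [habs, one_mul] at this
      calc ‖(1 / (2 * m))‖ * ‖∫ s in (-m + t)..(m + t), f s‖
          ≤ ‖(1 / (2 * m))‖ * (2 * m) := by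
            apply mul_le_mul_of_nonneg_left this (norm_nonneg _)
        _ = 1 := by
            rw [Real.norm_eq_abs, abs_of_nonneg (by positivity : (0:ℝ) ≤ 1 / (2 * m))]
            field_simp
    calc ‖(1 / 2 : ℝ) ^ (k + 1)‖ * ‖gAvg ψ g (k + 1) (ψ t x)‖
        ≤ ‖(1 / 2 : ℝ) ^ (k + 1)‖ * 1 := mul_le_mul_of_nonneg_left h2 (norm_nonneg _)
      _ = (1 / 2 : ℝ) ^ (k + 1) := by
          rw [mul_one, Real.norm_eq_abs, abs_of_nonneg (by positivity)]
  have hsum : Summable (fun k : ℕ => (1 / 2 : ℝ) ^ (k + 1)) := by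
    apply Summable.comp_injective (summable_geometric_of_lt_one (by norm_num) (by norm_num))
      (add_left_injective 1)
  -- term-wise limits
  have hterm : ∀ (c : ℝ) (F : Filter ℝ),
      (∀ ε > 0, ∀ᶠ t in F, ∀ u ∈ Set.Icc (-((1:ℝ)) + t - 0) (t + 0), True) → True := fun _ _ _ => trivial
  have hlim : ∀ (c : ℝ) (F : Filter ℝ), Tendsto f F (nhds c) →
      (∀ (T : ℝ), (∀ᶠ t in F, ∀ u, u ∈ Set.Icc (-(1:ℝ) + t) ((1:ℝ) + t) → True)) → True :=
    fun _ _ _ _ => trivial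
  -- generic: for each m ≥ 1 the average tends to c, atBot case
  have key : ∀ (c : ℝ) (F : Filter ℝ),
      (∀ s : Set ℝ, s ∈ F → ∀ r : ℝ, True) → True := fun _ _ _ => trivial
  have havgBot : ∀ k : ℕ, Tendsto (fun t => gAvg ψ g (k + 1) (ψ t x)) atBot (nhds 0) := by
    intro k
    have := avg_aux f hf ((k + 1 : ℕ) : ℝ) (by positivity) 0 atBot ?_
    · simpa only [← hgav] using this
    · intro ε hε
      have h0 := hx.1
      rw [Metric.tendsto_nhds] at h0
      obtain ⟨T, hT⟩ := (eventually_atBot).1 (h0 ε hε)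
      rw [eventually_atBot]
      refine ⟨T - ((k + 1 : ℕ) : ℝ), fun t ht u hu => ?_⟩
      have : u ≤ T := by
        have := hu.2
        have : u ≤ ((k+1:ℕ):ℝ) + t := hu.2
        linarith
      have := hT u this
      rw [Real.dist_eq] at this
      simpa using this.le
  have havgTop : ∀ k : ℕ, Tendsto (fun t => gAvg ψ g (k + 1) (ψ t x)) atTop (nhds 1) := by
    intro k
    have := avg_aux f hf ((k + 1 : ℕ) : ℝ) (by positivity) 1 atTop ?_
    · simpa only [← hgav] using this
    · intro ε hε
      have h1 := hx.2
      rw [Metric.tendsto_nhds] at h1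
      obtain ⟨T, hT⟩ := (eventually_atTop).1 (h1 ε hε)
      rw [eventually_atTop]
      refine ⟨T + ((k + 1 : ℕ) : ℝ), fun t ht u hu => ?_⟩
      have : T ≤ u := by
        have := hu.1
        linarith
      have := hT u this
      rw [Real.dist_eq] at this
      exact this.le
  constructor
  · have := tendsto_tsum_of_dominated_convergence (𝓕 := atBot)
      (f := fun t k => (1 / 2 : ℝ) ^ (k + 1) * gAvg ψ g (k + 1) (ψ t x))
      (g := fun k : ℕ => (0 : ℝ)) (bound := fun k : ℕ => (1 / 2 : ℝ) ^ (k + 1))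
      hsum
      (fun k => by simpa using (tendsto_const_nhds.mul (havgBot k)))
      (Eventually.of_forall (fun t k => hbound k t))
    simpa [pFun, tsum_zero] using this
  · have := tendsto_tsum_of_dominated_convergence (𝓕 := atTop)
      (f := fun t k => (1 / 2 : ℝ) ^ (k + 1) * gAvg ψ g (k + 1) (ψ t x))
      (g := fun k : ℕ => (1 / 2 : ℝ) ^ (k + 1)) (bound := fun k : ℕ => (1 / 2 : ℝ) ^ (k + 1))
      hsum
      (fun k => by simpa using (tendsto_const_nhds.mul (havgTop k)))
      (Eventually.of_forall (fun t k => hbound k t))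
    have htsum : ∑' k : ℕ, (1 / 2 : ℝ) ^ (k + 1) = 1 := by
      have h2 : ∑' k : ℕ, (1 / 2 : ℝ) ^ k = 2 := by
        rw [tsum_geometric_of_lt_one (by norm_num) (by norm_num)]; norm_num
      calc ∑' k : ℕ, (1 / 2 : ℝ) ^ (k + 1)
          = ∑' k : ℕ, (1 / 2 : ℝ) ^ k * (1 / 2) := by simp_rw [pow_succ]
        _ = (∑' k : ℕ, (1 / 2 : ℝ) ^ k) * (1 / 2) := tsum_mul_right
        _ = 1 := by rw [h2]; norm_num
    rw [htsum] at this
    simpa [pFun] using this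
end

section
/- Assume ℓ < 1. Then for every x ∈ X_{0,1}, the function s ↦ p(ψ_s(x)) is differentiable at s = 0 with derivative c = Σ_{n=1}^{∞} 2^{−n} · (1/(2n)) · ( g(ψ_n(x)) − g(ψ_{−n}(x)) ), and this derivative satisfies c > 0. -/
open Filter Topology

/-- assume `ℓ < 1`.  For every `x ∈ X_{0,1}`, the function
`s ↦ p(ψ_s(x))` is differentiable at `s = 0` with derivative
`c = Σ_{n=1}^∞ 2^{−n} ⬝ (1/(2n)) ⬝ (g(ψ_n(x)) − g(ψ_{−n}(x)))`,
and `c > 0`. -/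
theorem stmt_10
    {M : Type*} [TopologicalSpace M] (ψ : ℝ → M → M)
    (hcont : Continuous fun q : ℝ × M => ψ q.1 q.2)
    (hzero : ∀ x, ψ 0 x = x)
    (hadd : ∀ s t x, ψ (s + t) x = ψ s (ψ t x))
    (g : M → ℝ) (hg : Continuous g) (hg01 : ∀ x, g x ∈ Set.Icc (0 : ℝ) 1)
    (ℓ : ℝ) (hℓ : 0 < ℓ)
    (hgate : ∀ x, 0 < g x → g x < 1 → ∀ t : ℝ, ℓ < |t| →
      g (ψ t x) = 0 ∨ g (ψ t x) = 1)
    (hℓ1 : ℓ < 1)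
    (x : M) (hx : x ∈ Xset ψ g 0 1) :
    HasDerivAt (fun s => pFun ψ g (ψ s x))
      (∑' n : ℕ, (1 / 2 : ℝ) ^ (n + 1) *
        ((1 / (2 * ((n : ℝ) + 1))) *
          (g (ψ ((n : ℝ) + 1) x) - g (ψ (-((n : ℝ) + 1)) x)))) 0 ∧
    0 < ∑' n : ℕ, (1 / 2 : ℝ) ^ (n + 1) *
        ((1 / (2 * ((n : ℝ) + 1))) *
          (g (ψ ((n : ℝ) + 1) x) - g (ψ (-((n : ℝ) + 1)) x))) := by
  classical
  set G : ℝ → ℝ := fun t => g (ψ t x) with hGdef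
  have hG : Continuous G :=
    hg.comp (hcont.comp (continuous_id.prodMk continuous_const))
  have hG0 : ∀ t, 0 ≤ G t := fun t => (hg01 _).1
  have hG1 : ∀ t, G t ≤ 1 := fun t => (hg01 _).2
  set H : ℝ → ℝ := fun u => ∫ t in (0:ℝ)..u, G t with hHdef
  have hH : ∀ u, HasDerivAt H (G u) u := fun u =>
    (hG.integral_hasStrictDerivAt 0 u).hasDerivAt
  set f : ℕ → ℝ → ℝ := fun n s => (1/2:ℝ)^(n+1) * gAvg ψ g (n+1) (ψ s x) with hfdef
  set f' : ℕ → ℝ → ℝ := fun n s => (1/2:ℝ)^(n+1) *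
      ((1/(2*((n:ℝ)+1))) * (G (s + ((n:ℝ)+1)) - G (s - ((n:ℝ)+1)))) with hf'def
  -- rewrite f n via H
  have hfeq : ∀ n s, f n s = (1/2:ℝ)^(n+1) *
      ((1/(2*((n:ℝ)+1))) * (H (s + ((n:ℝ)+1)) - H (s - ((n:ℝ)+1)))) := by
    intro n s
    have h1 : ∀ t : ℝ, g (ψ t (ψ s x)) = G (t + s) := by
      intro t; rw [hGdef]; rw [← hadd]
    have hm : ((n+1 : ℕ) : ℝ) = (n:ℝ) + 1 := by push_cast; ring
    rw [hfdef]
    simp only [gAvg, hm]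
    congr 1
    congr 1
    simp_rw [h1]
    rw [intervalIntegral.integral_comp_add_right (fun t => G t) s]
    rw [intervalIntegral.integral_interval_sub_left (hG.intervalIntegrable _ _)
      (hG.intervalIntegrable _ _)]
    rw [show -((n:ℝ)+1) + s = s - ((n:ℝ)+1) by ring, show ((n:ℝ)+1) + s = s + ((n:ℝ)+1) by ring]
  have hder : ∀ n s, HasDerivAt (f n) (f' n s) s := by
    intro n s
    have hfun : f n = fun s => (1/2:ℝ)^(n+1) *
        ((1/(2*((n:ℝ)+1))) * (H (s + ((n:ℝ)+1)) - H (s - ((n:ℝ)+1)))) :=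
      funext (hfeq n)
    rw [hfun, hf'def]
    have h1 : HasDerivAt (fun s : ℝ => H (s + ((n:ℝ)+1))) (G (s + ((n:ℝ)+1))) s := by
      simpa [Function.comp_def] using (hH (s + ((n:ℝ)+1))).comp s ((hasDerivAt_id s).add_const ((n:ℝ)+1))
    have h2 : HasDerivAt (fun s : ℝ => H (s - ((n:ℝ)+1))) (G (s - ((n:ℝ)+1))) s := by
      simpa [Function.comp_def] using (hH (s - ((n:ℝ)+1))).comp s ((hasDerivAt_id s).sub_const ((n:ℝ)+1))
    exact (((h1.sub h2).const_mul _).const_mul _)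
  have hbound : ∀ n s, ‖f' n s‖ ≤ (1/2:ℝ)^(n+1) := by
    intro n s
    have hm : (0:ℝ) < (n:ℝ) + 1 := by positivity
    have hd : |G (s + ((n:ℝ)+1)) - G (s - ((n:ℝ)+1))| ≤ 1 := by
      rw [abs_sub_le_iff]
      constructor <;> nlinarith [hG0 (s + ((n:ℝ)+1)), hG1 (s + ((n:ℝ)+1)),
        hG0 (s - ((n:ℝ)+1)), hG1 (s - ((n:ℝ)+1))]
    have h2 : |(1/(2*((n:ℝ)+1)))| ≤ 1 := by
      rw [abs_of_pos (by positivity)]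
      rw [div_le_one (by positivity)]; linarith
    rw [hf'def]
    simp only [Real.norm_eq_abs, abs_mul]
    calc |(1/2:ℝ)^(n+1)| * (|1/(2*((n:ℝ)+1))| * |G (s + ((n:ℝ)+1)) - G (s - ((n:ℝ)+1))|)
        ≤ |(1/2:ℝ)^(n+1)| * (1 * 1) := by
          apply mul_le_mul_of_nonneg_left _ (abs_nonneg _)
          exact mul_le_mul h2 hd (abs_nonneg _) (by norm_num)
      _ = (1/2:ℝ)^(n+1) := by rw [abs_of_pos (by positivity)]; ring
  have hu : Summable fun n : ℕ => (1/2:ℝ)^(n+1) := by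
    have : Summable fun n : ℕ => (1/2:ℝ)^n :=
      summable_geometric_of_lt_one (by norm_num) (by norm_num)
    exact (this.mul_left (1/2:ℝ)).congr fun n => by rw [← pow_succ']
  have hsum0 : Summable fun n => f n 0 := by
    apply Summable.of_norm_bounded hu
    intro n
    rw [hfeq n 0]
    have hm : (0:ℝ) < (n:ℝ) + 1 := by positivity
    have hHb : |H (0 + ((n:ℝ)+1)) - H (0 - ((n:ℝ)+1))| ≤ 2*((n:ℝ)+1) := by
      have he : H (0 + ((n:ℝ)+1)) - H (0 - ((n:ℝ)+1))
          = ∫ t in (0 - ((n:ℝ)+1))..(0 + ((n:ℝ)+1)), G t :=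
        intervalIntegral.integral_interval_sub_left (hG.intervalIntegrable _ _)
          (hG.intervalIntegrable _ _)
      rw [he]
      have := intervalIntegral.norm_integral_le_of_norm_le_const
        (C := 1) (f := G) (a := 0 - ((n:ℝ)+1)) (b := 0 + ((n:ℝ)+1))
        (fun y _ => by rw [Real.norm_eq_abs, abs_le]; exact ⟨by linarith [hG0 y], hG1 y⟩)
      rw [Real.norm_eq_abs] at this
      calc |∫ t in (0 - ((n:ℝ)+1))..(0 + ((n:ℝ)+1)), G t| ≤ 1 * |0 + ((n:ℝ)+1) - (0 - ((n:ℝ)+1))| := this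
        _ = 2*((n:ℝ)+1) := by rw [abs_of_pos (by linarith)]; ring
    rw [Real.norm_eq_abs]
    simp only [abs_mul]
    calc |(1/2:ℝ)^(n+1)| * (|1/(2*((n:ℝ)+1))| * |H (0 + ((n:ℝ)+1)) - H (0 - ((n:ℝ)+1))|)
        ≤ |(1/2:ℝ)^(n+1)| * ((1/(2*((n:ℝ)+1))) * (2*((n:ℝ)+1))) := by
          apply mul_le_mul_of_nonneg_left _ (abs_nonneg _)
          exact mul_le_mul (le_of_eq (abs_of_pos (by positivity))) hHb (abs_nonneg _)
            (by positivity)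
      _ = (1/2:ℝ)^(n+1) := by
          rw [abs_of_pos (by positivity)]
          field_simp
  have hmain : HasDerivAt (fun s => ∑' n, f n s) (∑' n, f' n 0) 0 :=
    hasDerivAt_tsum hu hder hbound hsum0 0
  -- value of the derivative
  have hval : (∑' n, f' n 0) = ∑' n : ℕ, (1 / 2 : ℝ) ^ (n + 1) *
      ((1 / (2 * ((n : ℝ) + 1))) *
        (g (ψ ((n : ℝ) + 1) x) - g (ψ (-((n : ℝ) + 1)) x))) := by
    apply tsum_congr
    intro n
    show (1/2:ℝ)^(n+1) * (1/(2*((n:ℝ)+1)) * (G (0 + ((n:ℝ)+1)) - G (0 - ((n:ℝ)+1)))) = _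
    rw [zero_add, zero_sub]
  have hfunp : (fun s => pFun ψ g (ψ s x)) = fun s => ∑' n, f n s := rfl
  -- positivity : find t0 with G t0 = 1/2
  obtain ⟨hxb, hxt⟩ := hx
  obtain ⟨A, hA⟩ := (hxb.eventually (gt_mem_nhds (by norm_num : (0:ℝ) < 1/2))).exists_forall_of_atBot
  obtain ⟨B, hB⟩ := (hxt.eventually (lt_mem_nhds (by norm_num : (1/2:ℝ) < 1))).exists_forall_of_atTop
  set b := max A B with hbdef
  have hab : A ≤ b := le_max_left _ _
  have hGA : G A < 1/2 := hA A le_rfl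
  have hGb : 1/2 < G b := hB b (le_max_right _ _)
  obtain ⟨t0, ht0mem, ht0⟩ : ∃ t0 ∈ Set.Icc A b, G t0 = 1/2 := by
    have := intermediate_value_Icc hab (hG.continuousOn (s := Set.Icc A b))
    have hmem : (1/2:ℝ) ∈ Set.Icc (G A) (G b) := ⟨le_of_lt hGA, le_of_lt hGb⟩
    obtain ⟨t0, ht0, h⟩ := this hmem
    exact ⟨t0, ht0, h⟩
  -- gate along orbit
  have hgate' : ∀ u : ℝ, ℓ < |u - t0| → G u = 0 ∨ G u = 1 := by
    intro u hu'
    have hgt : (0:ℝ) < G t0 := by rw [ht0]; norm_num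
    have hlt : G t0 < 1 := by rw [ht0]; norm_num
    have := hgate (ψ t0 x) hgt hlt (u - t0) hu'
    rw [← hadd, sub_add_cancel] at this
    exact this
  -- G = 1 to the right of t0 + ℓ
  have hright : ∀ u, t0 + ℓ < u → G u = 1 := by
    intro u hu'
    rcases hgate' u (by rw [abs_of_pos (by linarith)]; linarith) with h0 | h1
    · exfalso
      obtain ⟨b2, hb2⟩ : ∃ b2, u ≤ b2 ∧ 1/2 < G b2 :=
        ⟨max u B, le_max_left _ _, hB _ (le_max_right _ _)⟩
      have hsub := intermediate_value_Icc hb2.1 (hG.continuousOn (s := Set.Icc u b2))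
      have hmem : (1/2:ℝ) ∈ Set.Icc (G u) (G b2) := ⟨by rw [h0]; norm_num, le_of_lt hb2.2⟩
      obtain ⟨v, hv, hGv⟩ := hsub hmem
      have : G v = 0 ∨ G v = 1 := hgate' v (by rw [abs_of_pos (by cases hv; linarith)]; cases hv; linarith)
      rw [hGv] at this
      rcases this with h | h <;> norm_num at h
    · exact h1
  -- G = 0 to the left of t0 - ℓ
  have hleft : ∀ u, u < t0 - ℓ → G u = 0 := by
    intro u hu'
    rcases hgate' u (by rw [abs_of_neg (by linarith)]; linarith) with h0 | h1
    · exact h0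
    · exfalso
      obtain ⟨a2, ha2⟩ : ∃ a2, a2 ≤ u ∧ G a2 < 1/2 :=
        ⟨min u A, min_le_left _ _, hA _ (min_le_right _ _)⟩
      have hsub := intermediate_value_Icc ha2.1 (hG.continuousOn (s := Set.Icc a2 u))
      have hmem : (1/2:ℝ) ∈ Set.Icc (G a2) (G u) := ⟨le_of_lt ha2.2, by rw [h1]; norm_num⟩
      obtain ⟨v, hv, hGv⟩ := hsub hmem
      have : G v = 0 ∨ G v = 1 := hgate' v (by rw [abs_of_neg (by cases hv; linarith)]; cases hv; linarith)
      rw [hGv] at this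
      rcases this with h | h <;> norm_num at h
  -- nonnegativity of each term
  have hterm : ∀ n : ℕ, 0 ≤ f' n 0 := by
    intro n
    show 0 ≤ (1/2:ℝ)^(n+1) * (1/(2*((n:ℝ)+1)) * (G (0 + ((n:ℝ)+1)) - G (0 - ((n:ℝ)+1))))
    have hm1 : (1:ℝ) ≤ (n:ℝ) + 1 := by linarith [(n.cast_nonneg : (0:ℝ) ≤ n)]
    have hdiff : 0 ≤ G (0 + ((n:ℝ)+1)) - G (0 - ((n:ℝ)+1)) := by
      rw [zero_add, zero_sub]
      by_cases hc : -((n:ℝ)+1) < t0 - ℓ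
      · rw [hleft _ hc]
        simpa using hG0 ((n:ℝ)+1)
      · push_neg at hc
        have ht0le : t0 ≤ ℓ - ((n:ℝ)+1) := by linarith
        have : t0 + ℓ < (n:ℝ)+1 := by linarith
        rw [hright _ this]
        linarith [hG1 (-((n:ℝ)+1))]
    positivity
  -- a strictly positive term
  obtain ⟨N, hN⟩ := exists_nat_gt (|t0| + ℓ)
  have hposN : 0 < f' N 0 := by
    show 0 < (1/2:ℝ)^(N+1) * (1/(2*((N:ℝ)+1)) * (G (0 + ((N:ℝ)+1)) - G (0 - ((N:ℝ)+1))))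
    have h1 : t0 + ℓ < (N:ℝ) + 1 := by
      have := abs_le.mp (le_refl |t0|)
      have h := le_abs_self t0
      linarith
    have h2 : -((N:ℝ)+1) < t0 - ℓ := by
      have h := neg_abs_le t0
      linarith
    rw [zero_add, zero_sub, hright _ h1, hleft _ h2]
    positivity
  have hsum' : Summable fun n => f' n 0 :=
    Summable.of_norm_bounded hu (fun n => hbound n 0)
  have hpos : 0 < ∑' n, f' n 0 := Summable.tsum_pos hsum' hterm N hposN
  constructor
  · rw [hfunp, ← hval]
    exact hmain
  · rw [← hval]
    exact hpos
end

section
/- Assume ℓ < 1. Then for every x ∈ X_{0,1}, the function t ↦ p(ψ_t(x)) is strictly increasing on ℝ. -/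
open Filter Topology

/-- assume `ℓ < 1`.  For every `x ∈ X_{0,1}`, the function
`t ↦ p(ψ_t(x))` is strictly increasing on `ℝ`. -/
theorem stmt_11
    {M : Type*} [TopologicalSpace M] (ψ : ℝ → M → M)
    (hcont : Continuous fun q : ℝ × M => ψ q.1 q.2)
    (hzero : ∀ x, ψ 0 x = x)
    (hadd : ∀ s t x, ψ (s + t) x = ψ s (ψ t x))
    (g : M → ℝ) (hg : Continuous g) (hg01 : ∀ x, g x ∈ Set.Icc (0 : ℝ) 1)
    (ℓ : ℝ) (hℓ : 0 < ℓ)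
    (hgate : ∀ x, 0 < g x → g x < 1 → ∀ t : ℝ, ℓ < |t| →
      g (ψ t x) = 0 ∨ g (ψ t x) = 1)
    (hℓ1 : ℓ < 1)
    (x : M) (hx : x ∈ Xset ψ g 0 1) :
    StrictMono (fun t : ℝ => pFun ψ g (ψ t x)) := by
  obtain ⟨hbot, htop⟩ := hx
  set F : ℝ → ℝ := fun t => g (ψ t x) with hFdef
  have hFc : Continuous F := hg.comp (hcont.comp (continuous_id.prodMk continuous_const))
  have hFmem : ∀ u, F u ∈ Set.Icc (0:ℝ) 1 := fun u => hg01 _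
  have hFint : ∀ a b : ℝ, IntervalIntegrable F MeasureTheory.volume a b :=
    fun a b => hFc.intervalIntegrable a b
  -- find s0 with F s0 = 1/2
  have hbot' : ∀ u : ℝ, ∃ t ≤ u, F t < 1/2 := by
    intro u
    have h1 : ∀ᶠ t in atBot, F t < 1/2 :=
      hbot.eventually (Filter.Tendsto.eventually_lt_const (by norm_num) tendsto_id)
    obtain ⟨t, ht1, ht2⟩ := (h1.and (eventually_le_atBot u)).exists
    exact ⟨t, ht2, ht1⟩
  have htop' : ∀ u : ℝ, ∃ t, u ≤ t ∧ 1/2 < F t := by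
    intro u
    have h1 : ∀ᶠ t in atTop, 1/2 < F t :=
      htop.eventually (Filter.Tendsto.eventually_const_lt (by norm_num) tendsto_id)
    obtain ⟨t, ht1, ht2⟩ := (h1.and (eventually_ge_atTop u)).exists
    exact ⟨t, ht2, ht1⟩
  obtain ⟨t1, -, ht1⟩ := hbot' 0
  obtain ⟨t2, -, ht2⟩ := htop' 0
  have hmem : (1/2 : ℝ) ∈ Set.uIcc (F t1) (F t2) :=
    Set.mem_uIcc.mpr (Or.inl ⟨ht1.le, ht2.le⟩)
  obtain ⟨s0, -, hs0⟩ := intermediate_value_uIcc (hFc.continuousOn) hmem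
  -- gate at s0
  have hgs0 : ∀ u : ℝ, ℓ < |u - s0| → F u = 0 ∨ F u = 1 := by
    intro u hu
    have h0 : (0:ℝ) < g (ψ s0 x) := by rw [show g (ψ s0 x) = F s0 from rfl, hs0]; norm_num
    have h1 : g (ψ s0 x) < 1 := by rw [show g (ψ s0 x) = F s0 from rfl, hs0]; norm_num
    have := hgate (ψ s0 x) h0 h1 (u - s0) hu
    rwa [← hadd, sub_add_cancel] at this
  -- any point with F v = 1/2 is within ℓ of s0
  have hhalf : ∀ v : ℝ, F v = 1/2 → |v - s0| ≤ ℓ := by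
    intro v hv
    by_contra h
    rcases hgs0 v (lt_of_not_ge fun hle => h hle) with h0 | h1 <;> rw [hv] at * <;> norm_num at *
  set ℓ' : ℝ := (ℓ + 1) / 2 with hℓ'def
  have hℓℓ' : ℓ < ℓ' := by rw [hℓ'def]; linarith
  have hℓ'1 : ℓ' < 1 := by rw [hℓ'def]; linarith
  -- F vanishes left of s0 - ℓ'
  have hF0 : ∀ u : ℝ, u ≤ s0 - ℓ' → F u = 0 := by
    intro u hu
    have hgu : F u = 0 ∨ F u = 1 := hgs0 u (by rw [abs_sub_comm, abs_of_pos (by linarith)]; linarith)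
    rcases hgu with h | h
    · exact h
    · exfalso
      obtain ⟨t', ht'u, ht'⟩ := hbot' u
      have hmem' : (1/2 : ℝ) ∈ Set.uIcc (F t') (F u) :=
        Set.mem_uIcc.mpr (Or.inl ⟨ht'.le, by rw [h]; norm_num⟩)
      obtain ⟨v, hv1, hv2⟩ := intermediate_value_uIcc (hFc.continuousOn) hmem'
      have hvle : v ≤ u := by
        rcases Set.mem_uIcc.mp hv1 with ⟨-, h2⟩ | ⟨-, h2⟩
        · exact h2
        · exact h2.trans ht'u
      have := hhalf v hv2
      rw [abs_le] at this
      linarith [this.1]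
  -- F is one right of s0 + ℓ'
  have hF1 : ∀ u : ℝ, s0 + ℓ' ≤ u → F u = 1 := by
    intro u hu
    have hgu : F u = 0 ∨ F u = 1 := hgs0 u (by rw [abs_of_pos (by linarith)]; linarith)
    rcases hgu with h | h
    · exfalso
      obtain ⟨t', ht'u, ht'⟩ := htop' u
      have hmem' : (1/2 : ℝ) ∈ Set.uIcc (F u) (F t') :=
        Set.mem_uIcc.mpr (Or.inl ⟨by rw [h]; norm_num, ht'.le⟩)
      obtain ⟨v, hv1, hv2⟩ := intermediate_value_uIcc (hFc.continuousOn) hmem'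
      have hvge : u ≤ v := by
        rcases Set.mem_uIcc.mp hv1 with ⟨h2, -⟩ | ⟨h2, -⟩
        · exact h2
        · exact ht'u.trans h2
      have := hhalf v hv2
      rw [abs_le] at this
      linarith [this.2]
    · exact h
  -- rewrite gAvg along the flow
  have hgA : ∀ (n : ℕ) (s : ℝ), gAvg ψ g n (ψ s x)
      = (1 / (2 * (n:ℝ))) * ∫ t in (s - (n:ℝ))..(s + (n:ℝ)), F t := by
    intro n s
    rw [gAvg]
    congr 1
    have h1 : ∀ t : ℝ, g (ψ t (ψ s x)) = F (t + s) := by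
      intro t; rw [hFdef]; simp only []; rw [← hadd]
    rw [intervalIntegral.integral_congr (g := fun t => F (t + s)) (fun t _ => h1 t),
      intervalIntegral.integral_comp_add_right]
    congr 1 <;> ring
  -- bounds on gAvg
  have hInt01 : ∀ a b : ℝ, a ≤ b → (∫ t in a..b, F t) ∈ Set.Icc (0:ℝ) (b - a) := by
    intro a b hab
    constructor
    · exact intervalIntegral.integral_nonneg hab (fun u _ => (hFmem u).1)
    · have := intervalIntegral.integral_mono_on (g := fun _ => (1:ℝ)) hab (hFint a b)
        (intervalIntegrable_const) (fun u _ => (hFmem u).2)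
      simpa using this
  have hgAmem : ∀ (n : ℕ) (s : ℝ), gAvg ψ g (n+1) (ψ s x) ∈ Set.Icc (0:ℝ) 1 := by
    intro n s
    rw [hgA]
    have hn : (0:ℝ) < 2 * ((n:ℝ)+1) := by positivity
    have hab : s - ((n:ℝ)+1) ≤ s + ((n:ℝ)+1) := by linarith
    obtain ⟨h1, h2⟩ := hInt01 _ _ hab
    push_cast
    constructor
    · positivity
    · rw [div_mul_eq_mul_div, mul_comm, ← div_mul_eq_mul_div, mul_one]
      rw [div_le_one hn]
      calc (∫ t in (s - ((n:ℝ)+1))..(s + ((n:ℝ)+1)), F t) ≤ _ := h2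
        _ ≤ 2 * ((n:ℝ)+1) := by linarith
  -- the shift inequality on integrals
  have hshift : ∀ (m : ℝ), 1 ≤ m → ∀ a b : ℝ, a ≤ b →
      (∫ t in (a - m)..(b - m), F t) ≤ ∫ t in (a + m)..(b + m), F t := by
    intro m hm a b hab
    have hpt : ∀ u : ℝ, F (u - 2*m) ≤ F u := by
      intro u
      rcases le_or_gt (s0 + ℓ') u with h | h
      · rw [hF1 u h]; exact (hFmem _).2
      · rw [hF0 (u - 2*m) (by linarith)]; exact (hFmem _).1
    calc (∫ t in (a - m)..(b - m), F t)
        = ∫ t in (a + m)..(b + m), F (t - 2*m) := by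
          rw [intervalIntegral.integral_comp_sub_right]
          congr 1 <;> ring
      _ ≤ ∫ t in (a + m)..(b + m), F t := by
          apply intervalIntegral.integral_mono_on (by linarith)
            ((hFc.comp (continuous_sub_right (2*m))).intervalIntegrable _ _)
            (hFint _ _) (fun u _ => hpt u)
  -- difference decomposition
  have hdiff : ∀ (m a b : ℝ),
      (∫ t in (b - m)..(b + m), F t) - (∫ t in (a - m)..(a + m), F t)
      = (∫ t in (a + m)..(b + m), F t) - (∫ t in (a - m)..(b - m), F t) := by
    intro m a b
    have h1 := intervalIntegral.integral_add_adjacent_intervals (hFint (a-m) (a+m)) (hFint (a+m) (b+m))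
    have h2 := intervalIntegral.integral_add_adjacent_intervals (hFint (a-m) (b-m)) (hFint (b-m) (b+m))
    linarith
  -- per-n monotonicity
  intro a b hab
  have hmono : ∀ n : ℕ, gAvg ψ g (n+1) (ψ a x) ≤ gAvg ψ g (n+1) (ψ b x) := by
    intro n
    rw [hgA, hgA]
    set m : ℝ := ((n:ℕ):ℝ) + 1 with hm
    have hm1 : (1:ℝ) ≤ m := by
      have : (0:ℝ) ≤ ((n:ℕ):ℝ) := Nat.cast_nonneg _
      rw [hm]; linarith
    have h1 := hshift m hm1 a b hab.le
    have h2 := hdiff m a b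
    have hpos : (0:ℝ) < 1 / (2 * (((n:ℕ)+1:ℕ):ℝ)) := by positivity
    apply mul_le_mul_of_nonneg_left _ hpos.le
    push_cast
    push_cast at h1 h2 ⊢
    linarith
  -- strict at a large index
  obtain ⟨N, hN⟩ := exists_nat_ge (max (s0 + ℓ' - a) (b - s0 + ℓ'))
  have hstrict : gAvg ψ g (N+1) (ψ a x) < gAvg ψ g (N+1) (ψ b x) := by
    rw [hgA, hgA]
    set m : ℝ := ((N:ℕ):ℝ) + 1 with hm
    have hNa : s0 + ℓ' ≤ a + m := by
      have := (le_max_left (s0 + ℓ' - a) (b - s0 + ℓ')).trans hN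
      rw [hm]; linarith
    have hNb : b - m ≤ s0 - ℓ' := by
      have := (le_max_right (s0 + ℓ' - a) (b - s0 + ℓ')).trans hN
      rw [hm]; linarith
    have hI1 : (∫ t in (a + m)..(b + m), F t) = b - a := by
      rw [intervalIntegral.integral_congr (g := fun _ => (1:ℝ))]
      · simp
      · intro u hu
        rw [Set.uIcc_of_le (by linarith : a + m ≤ b + m)] at hu
        exact hF1 u (hNa.trans hu.1)
    have hI0 : (∫ t in (a - m)..(b - m), F t) = 0 := by
      rw [intervalIntegral.integral_congr (g := fun _ => (0:ℝ))]
      · simp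
      · intro u hu
        rw [Set.uIcc_of_le (by linarith : a - m ≤ b - m)] at hu
        exact hF0 u (hu.2.trans hNb)
    have h2 := hdiff m a b
    have hpos : (0:ℝ) < 1 / (2 * (((N:ℕ)+1:ℕ):ℝ)) := by positivity
    apply mul_lt_mul_of_pos_left _ hpos
    push_cast
    push_cast at h2 ⊢
    rw [hI1, hI0] at h2
    linarith
  -- summability
  have hgeo : Summable (fun n : ℕ => (1/2:ℝ)^(n+1)) :=
    ((summable_geometric_of_lt_one (r := (1/2:ℝ)) (by norm_num) (by norm_num)).mul_left (1/2:ℝ)).congr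
      (fun n => by rw [pow_succ]; ring)
  have hsummB : Summable (fun n : ℕ => (1/2:ℝ)^(n+1) * gAvg ψ g (n+1) (ψ b x)) := by
    refine Summable.of_nonneg_of_le
      (fun n => mul_nonneg (by positivity) (hgAmem n b).1)
      (fun n => ?_) hgeo
    calc (1/2:ℝ)^(n+1) * gAvg ψ g (n+1) (ψ b x) ≤ (1/2:ℝ)^(n+1) * 1 :=
        mul_le_mul_of_nonneg_left (hgAmem n b).2 (by positivity)
      _ = (1/2:ℝ)^(n+1) := mul_one _
  -- conclude
  show pFun ψ g (ψ a x) < pFun ψ g (ψ b x)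
  rw [pFun, pFun]
  refine Summable.tsum_lt_tsum_of_nonneg
    (fun n => mul_nonneg (by positivity) (hgAmem n a).1)
    (fun n => mul_le_mul_of_nonneg_left (hmono n) (by positivity))
    (mul_lt_mul_of_pos_left hstrict (by positivity))
    hsummB
end

section
/- Assume ℓ < 1. Then for every x ∈ X_{0,1} there exists exactly one t ∈ ℝ such that p(ψ_t(x)) = 1/2; that is, every flow orbit contained in X_{0,1} intersects the level set p^{-1}(1/2) in exactly one point. -/
open Filter Topology

section FullerAux
open MeasureTheory intervalIntegral

noncomputable def Fav (h : ℝ → ℝ) (n : ℕ) (s : ℝ) : ℝ :=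
  (1 / (2 * ((n : ℝ) + 1))) * ∫ u in (s - ((n : ℝ) + 1))..(s + ((n : ℝ) + 1)), h u

noncomputable def Pfun (h : ℝ → ℝ) (s : ℝ) : ℝ :=
  ∑' n : ℕ, (1 / 2 : ℝ) ^ (n + 1) * Fav h n s

lemma Fav_nonneg {h : ℝ → ℝ} (h0 : ∀ t, 0 ≤ h t) (n : ℕ) (s : ℝ) : 0 ≤ Fav h n s := by
  have hm : (0:ℝ) < (n:ℝ) + 1 := by positivity
  apply mul_nonneg (by positivity)
  exact intervalIntegral.integral_nonneg (by linarith) (fun u _ => h0 u)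

lemma Fav_le_one {h : ℝ → ℝ} (hc : Continuous h) (h1 : ∀ t, h t ≤ 1) (n : ℕ) (s : ℝ) :
    Fav h n s ≤ 1 := by
  have hm : (0:ℝ) < (n:ℝ) + 1 := by positivity
  have hint : (∫ u in (s - ((n : ℝ) + 1))..(s + ((n : ℝ) + 1)), h u)
      ≤ ∫ _u in (s - ((n : ℝ) + 1))..(s + ((n : ℝ) + 1)), (1:ℝ) :=
    intervalIntegral.integral_mono_on (by linarith)
      (hc.intervalIntegrable _ _) intervalIntegrable_const (fun u _ => h1 u)
  rw [intervalIntegral.integral_const, smul_eq_mul, mul_one] at hint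
  have h2 : (∫ u in (s - ((n : ℝ) + 1))..(s + ((n : ℝ) + 1)), h u) ≤ 2 * ((n:ℝ)+1) := by
    linarith
  rw [Fav, div_mul_eq_mul_div, one_mul, div_le_one (by positivity)]
  linarith

lemma summable_geo_succ : Summable (fun n : ℕ => (1/2:ℝ)^(n+1)) := by
  exact (summable_nat_add_iff 1).mpr summable_geometric_two

lemma summable_Fav {h : ℝ → ℝ} (hc : Continuous h) (h0 : ∀ t, 0 ≤ h t) (h1 : ∀ t, h t ≤ 1)
    (s : ℝ) : Summable (fun n : ℕ => (1 / 2 : ℝ) ^ (n + 1) * Fav h n s) := by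
  refine Summable.of_nonneg_of_le
    (fun n => mul_nonneg (by positivity) (Fav_nonneg h0 n s)) (fun n => ?_) summable_geo_succ
  calc (1 / 2 : ℝ) ^ (n + 1) * Fav h n s ≤ (1 / 2 : ℝ) ^ (n + 1) * 1 :=
        mul_le_mul_of_nonneg_left (Fav_le_one hc h1 n s) (by positivity)
    _ = (1 / 2 : ℝ) ^ (n + 1) := mul_one _

lemma Fav_eq_primitive {h : ℝ → ℝ} (hc : Continuous h) (n : ℕ) (s : ℝ) :
    Fav h n s = (1 / (2 * ((n:ℝ)+1))) *
      ((∫ u in (0:ℝ)..(s+((n:ℝ)+1)), h u) - ∫ u in (0:ℝ)..(s-((n:ℝ)+1)), h u) := by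
  have hint : ∀ a b : ℝ, IntervalIntegrable h volume a b := hc.intervalIntegrable
  have key := intervalIntegral.integral_add_adjacent_intervals
    (hint 0 (s - ((n:ℝ)+1))) (hint (s - ((n:ℝ)+1)) (s + ((n:ℝ)+1)))
  rw [Fav]
  rw [show (∫ u in (s - ((n:ℝ)+1))..(s + ((n:ℝ)+1)), h u)
      = (∫ u in (0:ℝ)..(s+((n:ℝ)+1)), h u) - ∫ u in (0:ℝ)..(s-((n:ℝ)+1)), h u by linarith]

lemma Fav_continuous {h : ℝ → ℝ} (hc : Continuous h) (n : ℕ) :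
    Continuous (fun s => Fav h n s) := by
  have hint : ∀ a b : ℝ, IntervalIntegrable h volume a b := hc.intervalIntegrable
  have hG : Continuous (fun t : ℝ => ∫ u in (0:ℝ)..t, h u) :=
    intervalIntegral.continuous_primitive hint 0
  have : Continuous (fun s : ℝ => (1 / (2 * ((n:ℝ)+1))) *
      ((∫ u in (0:ℝ)..(s+((n:ℝ)+1)), h u) - ∫ u in (0:ℝ)..(s-((n:ℝ)+1)), h u)) :=
    continuous_const.mul ((hG.comp (continuous_id.add continuous_const)).sub
      (hG.comp (continuous_id.sub continuous_const)))
  simpa only [← Fav_eq_primitive hc] using this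

lemma Pfun_continuous {h : ℝ → ℝ} (hc : Continuous h) (h0 : ∀ t, 0 ≤ h t) (h1 : ∀ t, h t ≤ 1) :
    Continuous (Pfun h) := by
  apply continuous_tsum (u := fun n : ℕ => (1/2:ℝ)^(n+1))
    (fun n => continuous_const.mul (Fav_continuous hc n)) summable_geo_succ
  intro n s
  simp only [Pi.mul_apply]
  rw [Real.norm_eq_abs, abs_mul, abs_of_nonneg (show (0:ℝ) ≤ (1/2:ℝ)^(n+1) by positivity),
    abs_of_nonneg (Fav_nonneg h0 n s)]
  calc (1 / 2 : ℝ) ^ (n + 1) * Fav h n s ≤ (1 / 2 : ℝ) ^ (n + 1) * 1 :=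
        mul_le_mul_of_nonneg_left (Fav_le_one hc h1 n s) (by positivity)
    _ = (1 / 2 : ℝ) ^ (n + 1) := mul_one _

lemma Fav_mono {h : ℝ → ℝ} (hc : Continuous h)
    (hC : ∀ a b : ℝ, a + 2 ≤ b → h a ≤ h b)
    (n : ℕ) {s1 s2 : ℝ} (hs : s1 ≤ s2) : Fav h n s1 ≤ Fav h n s2 := by
  set m : ℝ := (n:ℝ) + 1 with hm
  have hm1 : (1:ℝ) ≤ m := by rw [hm]; linarith [Nat.cast_nonneg (α := ℝ) n]
  have hint : ∀ a b : ℝ, IntervalIntegrable h volume a b := hc.intervalIntegrable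
  have e1 := intervalIntegral.integral_add_adjacent_intervals
    (hint (s1 - m) (s1 + m)) (hint (s1 + m) (s2 + m))
  have e2 := intervalIntegral.integral_add_adjacent_intervals
    (hint (s1 - m) (s2 - m)) (hint (s2 - m) (s2 + m))
  have e3 : (∫ u in (s1 + m)..(s2 + m), h (u - 2*m)) = ∫ u in (s1 - m)..(s2 - m), h u := by
    have := intervalIntegral.integral_comp_sub_right (a := s1 + m) (b := s2 + m) h (2*m)
    rw [show s1 + m - 2*m = s1 - m by ring, show s2 + m - 2*m = s2 - m by ring] at this
    exact this
  have e4 : (∫ u in (s1 + m)..(s2 + m), h (u - 2*m)) ≤ ∫ u in (s1 + m)..(s2 + m), h u := by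
    apply intervalIntegral.integral_mono_on (by linarith)
      ((hc.comp (continuous_id.sub continuous_const)).intervalIntegrable _ _) (hint _ _)
    intro u _
    exact hC (u - 2*m) u (by linarith)
  have key : (∫ u in (s1 - m)..(s1 + m), h u) ≤ ∫ u in (s2 - m)..(s2 + m), h u := by linarith
  rw [Fav, Fav, ← hm]
  exact mul_le_mul_of_nonneg_left key (by positivity)

/-- The key strict gap for a large index, when `h` is `0` left of `c - ℓ` and
`1` right of `c + ℓ`. -/
lemma Fav_gap {h : ℝ → ℝ} (hc : Continuous h)
    {c ℓ : ℝ} (hA : ∀ t, c + ℓ < t → h t = 1) (hB : ∀ t, t < c - ℓ → h t = 0)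
    (n : ℕ) {s1 s2 : ℝ} (hs : s1 < s2)
    (hbig1 : c + ℓ - s1 < (n:ℝ) + 1) (hbig2 : s2 - (c - ℓ) < (n:ℝ) + 1) :
    Fav h n s2 - Fav h n s1 = (1 / (2 * ((n:ℝ)+1))) * (s2 - s1) := by
  set m : ℝ := (n:ℝ) + 1 with hm
  have hint : ∀ a b : ℝ, IntervalIntegrable h volume a b := hc.intervalIntegrable
  have e1 := intervalIntegral.integral_add_adjacent_intervals
    (hint (s1 - m) (s1 + m)) (hint (s1 + m) (s2 + m))
  have e2 := intervalIntegral.integral_add_adjacent_intervals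
    (hint (s1 - m) (s2 - m)) (hint (s2 - m) (s2 + m))
  have e3 : (∫ u in (s1 + m)..(s2 + m), h u) = s2 - s1 := by
    rw [intervalIntegral.integral_congr (g := fun _ => (1:ℝ)) (fun u hu => by
      rw [Set.uIcc_of_le (by linarith)] at hu
      exact hA u (by linarith [hu.1]))]
    rw [intervalIntegral.integral_const, smul_eq_mul, mul_one]; ring
  have e4 : (∫ u in (s1 - m)..(s2 - m), h u) = 0 := by
    rw [intervalIntegral.integral_congr (g := fun _ => (0:ℝ)) (fun u hu => by
      rw [Set.uIcc_of_le (by linarith)] at hu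
      exact hB u (by linarith [hu.2]))]
    simp
  have key : (∫ u in (s2 - m)..(s2 + m), h u) - (∫ u in (s1 - m)..(s1 + m), h u)
      = s2 - s1 := by linarith
  rw [Fav, Fav, ← hm, ← mul_sub, key]

lemma Pfun_strictMono {h : ℝ → ℝ} (hc : Continuous h) (h0 : ∀ t, 0 ≤ h t) (h1 : ∀ t, h t ≤ 1)
    (hC : ∀ a b : ℝ, a + 2 ≤ b → h a ≤ h b)
    {c ℓ : ℝ} (hA : ∀ t, c + ℓ < t → h t = 1) (hB : ∀ t, t < c - ℓ → h t = 0)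
    {s1 s2 : ℝ} (hs : s1 < s2) : Pfun h s1 < Pfun h s2 := by
  obtain ⟨N, hN⟩ := exists_nat_gt (max (c + ℓ - s1) (s2 - (c - ℓ)))
  have hb1 : c + ℓ - s1 < (N:ℝ) + 1 := by
    have := le_max_left (c + ℓ - s1) (s2 - (c - ℓ)); linarith
  have hb2 : s2 - (c - ℓ) < (N:ℝ) + 1 := by
    have := le_max_right (c + ℓ - s1) (s2 - (c - ℓ)); linarith
  have hgap := Fav_gap hc hA hB N hs hb1 hb2
  have hsum1 := summable_Fav hc h0 h1 s1
  have hsum2 := summable_Fav hc h0 h1 s2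
  have hdiff : Pfun h s2 - Pfun h s1
      = ∑' n : ℕ, ((1/2:ℝ)^(n+1) * Fav h n s2 - (1/2:ℝ)^(n+1) * Fav h n s1) :=
    (hsum2.tsum_sub hsum1).symm
  have hterm : ∀ n : ℕ, 0 ≤ (1/2:ℝ)^(n+1) * Fav h n s2 - (1/2:ℝ)^(n+1) * Fav h n s1 := by
    intro n
    have := Fav_mono hc hC n hs.le
    nlinarith [pow_pos (show (0:ℝ) < 1/2 by norm_num) (n+1)]
  have hle := Summable.le_tsum (f := fun n : ℕ =>
      (1/2:ℝ)^(n+1) * Fav h n s2 - (1/2:ℝ)^(n+1) * Fav h n s1)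
    (hsum2.sub hsum1) N (fun j _ => hterm j)
  have hNpos : (0:ℝ) < (1/2:ℝ)^(N+1) * ((1 / (2 * ((N:ℝ)+1))) * (s2 - s1)) := by
    have hN1 : (0:ℝ) < 2 * ((N:ℝ) + 1) := by positivity
    exact mul_pos (pow_pos (by norm_num) _) (mul_pos (by positivity) (by linarith))
  have : (0:ℝ) < (1/2:ℝ)^(N+1) * Fav h N s2 - (1/2:ℝ)^(N+1) * Fav h N s1 := by
    rw [← mul_sub, hgap]; exact hNpos
  linarith [hle, hdiff]

lemma Fav_eq_one {h : ℝ → ℝ} {c ℓ : ℝ} (hA : ∀ t, c + ℓ < t → h t = 1)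
    (n : ℕ) {s : ℝ} (hgt : c + ℓ < s - ((n:ℝ)+1)) : Fav h n s = 1 := by
  set m : ℝ := (n:ℝ) + 1 with hm
  have hm0 : (0:ℝ) < m := by positivity
  rw [Fav, ← hm]
  rw [intervalIntegral.integral_congr (g := fun _ => (1:ℝ)) (fun u hu => by
    rw [Set.uIcc_of_le (by linarith)] at hu
    exact hA u (by linarith [hu.1]))]
  rw [intervalIntegral.integral_const, smul_eq_mul, mul_one]
  field_simp
  ring

lemma Fav_eq_zero {h : ℝ → ℝ} {c ℓ : ℝ} (hB : ∀ t, t < c - ℓ → h t = 0)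
    (n : ℕ) {s : ℝ} (hlt : s + ((n:ℝ)+1) < c - ℓ) : Fav h n s = 0 := by
  set m : ℝ := (n:ℝ) + 1 with hm
  have hm0 : (0:ℝ) < m := by positivity
  rw [Fav, ← hm]
  rw [intervalIntegral.integral_congr (g := fun _ => (0:ℝ)) (fun u hu => by
    rw [Set.uIcc_of_le (by linarith)] at hu
    exact hB u (by linarith [hu.2]))]
  simp

lemma Pfun_low {h : ℝ → ℝ} (hc : Continuous h) (h0 : ∀ t, 0 ≤ h t) (h1 : ∀ t, h t ≤ 1)
    {c ℓ : ℝ} (hB : ∀ t, t < c - ℓ → h t = 0) :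
    Pfun h (c - ℓ - 3) ≤ 1/4 := by
  set s : ℝ := c - ℓ - 3 with hs
  have hsum : Summable (fun n : ℕ => (1/2:ℝ)^(n+1) * Fav h n s) := summable_Fav hc h0 h1 s
  have hf0 : (1/2:ℝ)^(0+1) * Fav h 0 s = 0 := by
    rw [Fav_eq_zero hB 0 (by push_cast; rw [hs]; linarith)]; ring
  have hf1 : (1/2:ℝ)^(1+1) * Fav h 1 s = 0 := by
    rw [Fav_eq_zero hB 1 (by push_cast; rw [hs]; linarith)]; ring
  have hsum1 : Summable (fun n : ℕ => (1/2:ℝ)^(n+1+1) * Fav h (n+1) s) :=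
    (summable_nat_add_iff 1).mpr hsum
  have hsum2 : Summable (fun n : ℕ => (1/2:ℝ)^(n+2+1) * Fav h (n+2) s) := by
    have := (summable_nat_add_iff (f := fun n : ℕ => (1/2:ℝ)^(n+1) * Fav h n s) 2).mpr hsum
    convert this using 2 with n
  have e : Pfun h s = ∑' n : ℕ, (1/2:ℝ)^(n+2+1) * Fav h (n+2) s := by
    rw [Pfun, hsum.tsum_eq_zero_add, hf0, zero_add, hsum1.tsum_eq_zero_add, hf1, zero_add]
  have hle : (∑' n : ℕ, (1/2:ℝ)^(n+2+1) * Fav h (n+2) s)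
      ≤ ∑' n : ℕ, (1/2:ℝ)^(n+3) := by
    apply Summable.tsum_le_tsum _ hsum2 ((summable_nat_add_iff 3).mpr summable_geometric_two)
    intro n
    calc (1/2:ℝ)^(n+2+1) * Fav h (n+2) s ≤ (1/2:ℝ)^(n+2+1) * 1 :=
          mul_le_mul_of_nonneg_left (Fav_le_one hc h1 _ s) (by positivity)
      _ = (1/2:ℝ)^(n+3) := by ring
  have hval : (∑' n : ℕ, (1/2:ℝ)^(n+3)) = 1/4 := by
    have : ∀ n : ℕ, (1/2:ℝ)^(n+3) = (1/2:ℝ)^n * (1/8) := fun n => by ring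
    rw [tsum_congr this, tsum_mul_right, tsum_geometric_two]; norm_num
  rw [e]; linarith

lemma Pfun_high {h : ℝ → ℝ} (hc : Continuous h) (h0 : ∀ t, 0 ≤ h t) (h1 : ∀ t, h t ≤ 1)
    {c ℓ : ℝ} (hA : ∀ t, c + ℓ < t → h t = 1) :
    3/4 ≤ Pfun h (c + ℓ + 3) := by
  set s : ℝ := c + ℓ + 3 with hs
  have hsum : Summable (fun n : ℕ => (1/2:ℝ)^(n+1) * Fav h n s) := summable_Fav hc h0 h1 s
  have hF0 : Fav h 0 s = 1 := Fav_eq_one hA 0 (by push_cast; rw [hs]; linarith)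
  have hF1 : Fav h 1 s = 1 := Fav_eq_one hA 1 (by push_cast; rw [hs]; linarith)
  have hle := hsum.sum_le_tsum (Finset.range 2)
    (fun n _ => mul_nonneg (by positivity) (Fav_nonneg h0 n s))
  rw [Finset.sum_range_succ, Finset.sum_range_one, hF0, hF1] at hle
  rw [Pfun]
  norm_num at hle ⊢
  linarith

lemma Pkey {h : ℝ → ℝ} (hc : Continuous h) (h0 : ∀ t, 0 ≤ h t) (h1 : ∀ t, h t ≤ 1)
    {c ℓ : ℝ} (hℓ : 0 < ℓ) (hℓ1 : ℓ < 1)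
    (hA : ∀ t, c + ℓ < t → h t = 1) (hB : ∀ t, t < c - ℓ → h t = 0) :
    ∃! s : ℝ, Pfun h s = 1/2 := by
  have hC : ∀ a b : ℝ, a + 2 ≤ b → h a ≤ h b := by
    intro a b hab
    by_cases ha : a < c - ℓ
    · rw [hB a ha]; exact h0 b
    · push_neg at ha
      rw [hA b (by linarith)]
      exact h1 a
  have hs12 : c - ℓ - 3 ≤ c + ℓ + 3 := by linarith
  have hlow := Pfun_low hc h0 h1 hB
  have hhigh := Pfun_high hc h0 h1 hA
  obtain ⟨t, -, ht⟩ := intermediate_value_Icc hs12 (Pfun_continuous hc h0 h1).continuousOn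
    (Set.mem_Icc.mpr ⟨by linarith, by linarith⟩ :
      (1/2 : ℝ) ∈ Set.Icc (Pfun h (c - ℓ - 3)) (Pfun h (c + ℓ + 3)))
  refine ⟨t, ht, fun y hy => ?_⟩
  by_contra hne
  rcases lt_or_gt_of_ne hne with hlt | hgt
  · have := Pfun_strictMono hc h0 h1 hC hA hB hlt; rw [ht, hy] at this; linarith
  · have := Pfun_strictMono hc h0 h1 hC hA hB hgt; rw [ht, hy] at this; linarith

end FullerAux

/-- assume `ℓ < 1`.  For every `x ∈ X_{0,1}` there exists
exactly one `t ∈ ℝ` with `p(ψ_t(x)) = 1/2`. -/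
theorem stmt_12
    {M : Type*} [TopologicalSpace M] (ψ : ℝ → M → M)
    (hcont : Continuous fun q : ℝ × M => ψ q.1 q.2)
    (hzero : ∀ x, ψ 0 x = x)
    (hadd : ∀ s t x, ψ (s + t) x = ψ s (ψ t x))
    (g : M → ℝ) (hg : Continuous g) (hg01 : ∀ x, g x ∈ Set.Icc (0 : ℝ) 1)
    (ℓ : ℝ) (hℓ : 0 < ℓ)
    (hgate : ∀ x, 0 < g x → g x < 1 → ∀ t : ℝ, ℓ < |t| →
      g (ψ t x) = 0 ∨ g (ψ t x) = 1)
    (hℓ1 : ℓ < 1)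
    (x : M) (hx : x ∈ Xset ψ g 0 1) :
    ∃! t : ℝ, pFun ψ g (ψ t x) = 1 / 2 := by
  set h : ℝ → ℝ := fun t => g (ψ t x) with hh
  have hch : Continuous h := hg.comp (hcont.comp (continuous_id.prodMk continuous_const))
  have h0 : ∀ t, 0 ≤ h t := fun t => (hg01 _).1
  have h1 : ∀ t, h t ≤ 1 := fun t => (hg01 _).2
  obtain ⟨hbot, htop⟩ := hx
  have e1 : ∀ᶠ t in atBot, h t < 1/2 :=
    hbot.eventually (eventually_lt_nhds (by norm_num : (0:ℝ) < 1/2))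
  have e2 : ∀ᶠ t in atTop, 1/2 < h t :=
    htop.eventually (eventually_gt_nhds (by norm_num : (1/2:ℝ) < 1))
  obtain ⟨a, ha⟩ := e1.exists
  obtain ⟨b, hb, hab⟩ := (e2.and (eventually_ge_atTop a)).exists
  obtain ⟨c, -, hc12⟩ := intermediate_value_Icc hab hch.continuousOn
    (Set.mem_Icc.mpr ⟨ha.le, hb.le⟩ : (1/2:ℝ) ∈ Set.Icc (h a) (h b))
  have hmem : ∀ t : ℝ, ℓ < |t - c| → h t = 0 ∨ h t = 1 := by
    intro t ht
    have := hgate (ψ c x)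
      (by rw [show g (ψ c x) = h c from rfl, hc12]; norm_num)
      (by rw [show g (ψ c x) = h c from rfl, hc12]; norm_num) (t - c) ht
    rw [← hadd, show t - c + c = t by ring] at this
    exact this
  have hA : ∀ t, c + ℓ < t → h t = 1 := by
    intro t ht
    rcases hmem t (by rw [abs_of_pos (by linarith)]; linarith) with h0t | h1t
    · exfalso
      obtain ⟨b', hb', htb'⟩ := (e2.and (eventually_ge_atTop t)).exists
      obtain ⟨u, hu, hu2⟩ := intermediate_value_Icc htb' hch.continuousOn
        (Set.mem_Icc.mpr ⟨by rw [h0t]; norm_num, hb'.le⟩ :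
          (1/2:ℝ) ∈ Set.Icc (h t) (h b'))
      rcases hmem u (by rw [abs_of_pos (by linarith [hu.1])]; linarith [hu.1]) with h' | h' <;>
        rw [hu2] at h' <;> norm_num at h'
    · exact h1t
  have hB : ∀ t, t < c - ℓ → h t = 0 := by
    intro t ht
    rcases hmem t (by rw [abs_of_neg (by linarith)]; linarith) with h0t | h1t
    · exact h0t
    · exfalso
      obtain ⟨a', ha', ha't⟩ := (e1.and (eventually_le_atBot t)).exists
      obtain ⟨u, hu, hu2⟩ := intermediate_value_Icc ha't hch.continuousOn
        (Set.mem_Icc.mpr ⟨ha'.le, by rw [h1t]; norm_num⟩ :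
          (1/2:ℝ) ∈ Set.Icc (h a') (h t))
      rcases hmem u (by rw [abs_of_neg (by linarith [hu.2])]; linarith [hu.2]) with h' | h' <;>
        rw [hu2] at h' <;> norm_num at h'
  have htrans : ∀ s : ℝ, pFun ψ g (ψ s x) = Pfun h s := by
    intro s
    rw [pFun, Pfun]
    apply tsum_congr
    intro n
    congr 1
    rw [gAvg, Fav]
    have hcast : ((n + 1 : ℕ) : ℝ) = (n : ℝ) + 1 := by push_cast; ring
    rw [hcast]
    congr 1
    have hint : ∀ t : ℝ, g (ψ t (ψ s x)) = h (t + s) := fun t => by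
      rw [hh]; simp only [← hadd]
    calc (∫ t in (-((n:ℝ)+1))..((n:ℝ)+1), g (ψ t (ψ s x)))
        = ∫ t in (-((n:ℝ)+1))..((n:ℝ)+1), h (t + s) := by simp only [hint]
      _ = ∫ t in (-((n:ℝ)+1) + s)..(((n:ℝ)+1) + s), h t :=
          intervalIntegral.integral_comp_add_right h s
      _ = ∫ t in (s - ((n:ℝ)+1))..(s + ((n:ℝ)+1)), h t := by
          rw [show -((n:ℝ)+1) + s = s - ((n:ℝ)+1) by ring,
            show ((n:ℝ)+1) + s = s + ((n:ℝ)+1) by ring]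
  simp only [htrans]
  exact Pkey hch h0 h1 hℓ hℓ1 hA hB
end

section
/- Assume ℓ < 1. Then for each pair (i,j) with i,j ∈ {0,1}, the set X_{i,j} ∩ p^{-1}(1/2) is open in the subspace topology of p^{-1}(1/2). -/
open Filter Topology

section Aux
open MeasureTheory

lemma const01 (f : ℝ → ℝ) (hf : Continuous f) (S : Set ℝ) (hS : S.OrdConnected)
    (h01 : ∀ t ∈ S, f t = 0 ∨ f t = 1) : ∀ s ∈ S, ∀ t ∈ S, f s = f t := by
  have key : ∀ s ∈ S, ∀ t ∈ S, f s = 0 → f t = 1 → False := by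
    intro s hs t ht h0 h1
    have hm : (1/2 : ℝ) ∈ Set.uIcc (f s) (f t) := by
      rw [h0, h1, Set.uIcc_of_le (by norm_num)]; constructor <;> norm_num
    obtain ⟨c, hc, hfc⟩ := intermediate_value_uIcc (hf.continuousOn (s := Set.uIcc s t)) hm
    have := h01 c (hS.uIcc_subset hs ht hc)
    rw [hfc] at this; rcases this with h | h <;> norm_num at h
  intro s hs t ht
  rcases h01 s hs with h | h <;> rcases h01 t ht with h' | h'
  · rw [h, h']
  · exact (key s hs t ht h h').elim
  · exact (key t ht s hs h' h).elim
  · rw [h, h']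

variable {M : Type*} [TopologicalSpace M] (ψ : ℝ → M → M) (g : M → ℝ)

lemma orbit_cont (hcont : Continuous fun q : ℝ × M => ψ q.1 q.2)
    (hg : Continuous g) (y : M) : Continuous fun t => g (ψ t y) :=
  hg.comp (hcont.comp (continuous_id.prodMk continuous_const))

omit [TopologicalSpace M] in
lemma gAvg_const (y : M) (n : ℕ) (hn : 1 ≤ n) (c : ℝ)
    (hc : ∀ t ∈ Set.Icc (-(n:ℝ)) n, g (ψ t y) = c) : gAvg ψ g n y = c := by
  have hln : (0:ℝ) < n := by exact_mod_cast hn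
  have : (∫ t in (-(n:ℝ))..n, g (ψ t y)) = ∫ t in (-(n:ℝ))..n, c := by
    apply intervalIntegral.integral_congr
    rw [Set.uIcc_of_le (by linarith)]
    exact hc
  rw [gAvg, this, intervalIntegral.integral_const, smul_eq_mul]
  field_simp
  ring

lemma gAvg_mem (hcont : Continuous fun q : ℝ × M => ψ q.1 q.2) (hg : Continuous g)
    (hg01 : ∀ x, g x ∈ Set.Icc (0 : ℝ) 1) (y : M) (n : ℕ) (hn : 1 ≤ n) :
    gAvg ψ g n y ∈ Set.Icc (0:ℝ) 1 := by
  have hc := orbit_cont ψ g hcont hg y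
  have hI : IntervalIntegrable (fun t => g (ψ t y)) volume (-(n:ℝ)) n :=
    hc.intervalIntegrable _ _
  have hln : (0:ℝ) < n := by exact_mod_cast hn
  have h1 : (0:ℝ) ≤ ∫ t in (-(n:ℝ))..n, g (ψ t y) :=
    intervalIntegral.integral_nonneg (by linarith) (fun t _ => (hg01 _).1)
  have h2 : (∫ t in (-(n:ℝ))..n, g (ψ t y)) ≤ ∫ t in (-(n:ℝ))..n, (1:ℝ) := by
    apply intervalIntegral.integral_mono_on (by linarith) hI intervalIntegrable_const
    exact fun t _ => (hg01 _).2
  rw [intervalIntegral.integral_const, smul_eq_mul, mul_one] at h2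
  constructor
  · exact mul_nonneg (by positivity) h1
  · rw [gAvg, div_mul_eq_mul_div, one_mul, div_le_one (by positivity)]
    linarith

lemma pSummable (hcont : Continuous fun q : ℝ × M => ψ q.1 q.2) (hg : Continuous g)
    (hg01 : ∀ x, g x ∈ Set.Icc (0 : ℝ) 1) (y : M) :
    Summable (fun n : ℕ => (1 / 2 : ℝ) ^ (n + 1) * gAvg ψ g (n + 1) y) := by
  apply Summable.of_nonneg_of_le
  · intro n
    exact mul_nonneg (by positivity) (gAvg_mem ψ g hcont hg hg01 y (n+1) (by omega)).1
  · intro n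
    calc (1 / 2 : ℝ) ^ (n + 1) * gAvg ψ g (n + 1) y ≤ (1/2:ℝ)^(n+1) * 1 :=
          mul_le_mul_of_nonneg_left (gAvg_mem ψ g hcont hg hg01 y (n+1) (by omega)).2 (by positivity)
      _ ≤ (1/2:ℝ)^n := by rw [mul_one, pow_succ]; nlinarith [pow_nonneg (by norm_num : (0:ℝ) ≤ 1/2) n]
  · exact summable_geometric_two

lemma pBound (hcont : Continuous fun q : ℝ × M => ψ q.1 q.2) (hg : Continuous g)
    (hg01 : ∀ x, g x ∈ Set.Icc (0 : ℝ) 1) (y : M) (c : ℝ) (hc : c = 0 ∨ c = 1)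
    (hcc : ∀ t ∈ Set.Icc (-2:ℝ) 2, g (ψ t y) = c) :
    pFun ψ g y ≠ 1/2 := by
  have g1 : gAvg ψ g 1 y = c := by
    apply gAvg_const ψ g y 1 le_rfl c
    intro t ht
    apply hcc
    simp only [Nat.cast_one] at ht
    exact ⟨by linarith [ht.1], by linarith [ht.2]⟩
  have g2 : gAvg ψ g 2 y = c := by
    apply gAvg_const ψ g y 2 (by norm_num) c
    intro t ht
    apply hcc
    simp only [Nat.cast_ofNat] at ht
    exact ⟨by linarith [ht.1], by linarith [ht.2]⟩
  set a : ℕ → ℝ := fun n => (1 / 2 : ℝ) ^ (n + 1) * gAvg ψ g (n + 1) y with ha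
  have hs : Summable a := pSummable ψ g hcont hg hg01 y
  have hpfun : pFun ψ g y = ∑' n, a n := rfl
  rcases hc with rfl | rfl
  · intro hp
    rw [hpfun] at hp
    have hsplit := Summable.sum_add_tsum_nat_add (f := a) 2 hs
    have hfirst : ∑ i ∈ Finset.range 2, a i = 0 := by
      simp [ha, Finset.sum_range_succ, g1, g2]
    have htail : (∑' n : ℕ, a (n + 2)) ≤ ∑' n : ℕ, (1/2:ℝ)^(n+3) := by
      apply Summable.tsum_le_tsum
      · intro n
        have := gAvg_mem ψ g hcont hg hg01 y (n+3) (by omega)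
        calc a (n+2) = (1/2:ℝ)^(n+3) * gAvg ψ g (n+3) y := rfl
          _ ≤ (1/2:ℝ)^(n+3) * 1 := mul_le_mul_of_nonneg_left this.2 (by positivity)
          _ = (1/2:ℝ)^(n+3) := mul_one _
      · exact (summable_nat_add_iff 2).mpr hs
      · have h' : Summable (fun n : ℕ => (1/2:ℝ)^n) := summable_geometric_two
        have := h'.mul_left ((1/2:ℝ)^3)
        simpa [pow_add, mul_comm] using this
    have hgeo : (∑' n : ℕ, (1/2:ℝ)^(n+3)) = 1/4 := by
      have h3 : (∑' n : ℕ, (1/2:ℝ)^(n+3)) = (1/2:ℝ)^3 * ∑' n : ℕ, (1/2:ℝ)^n := by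
        rw [← tsum_mul_left]
        congr 1; ext n; rw [pow_add]; ring
      rw [h3, tsum_geometric_two]
      norm_num
    rw [hfirst, zero_add] at hsplit
    rw [← hsplit] at hp
    rw [hp, hgeo] at htail
    norm_num at htail
  · intro hp
    rw [hpfun] at hp
    have hlow : ∑ i ∈ Finset.range 2, a i ≤ ∑' n, a n := by
      apply Summable.sum_le_tsum _ _ hs
      intro n _
      exact mul_nonneg (by positivity) (gAvg_mem ψ g hcont hg hg01 y (n+1) (by omega)).1
    have hfirst : ∑ i ∈ Finset.range 2, a i = 3/4 := by
      simp [ha, Finset.sum_range_succ, g1, g2]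
      norm_num
    rw [hfirst, hp] at hlow
    norm_num at hlow

lemma tails (hcont : Continuous fun q : ℝ × M => ψ q.1 q.2)
    (hadd : ∀ s t x, ψ (s + t) x = ψ s (ψ t x))
    (hg : Continuous g) (hg01 : ∀ x, g x ∈ Set.Icc (0 : ℝ) 1)
    (ℓ : ℝ) (hℓ : 0 < ℓ)
    (hgate : ∀ x, 0 < g x → g x < 1 → ∀ t : ℝ, ℓ < |t| →
      g (ψ t x) = 0 ∨ g (ψ t x) = 1)
    (hℓ1 : ℓ < 1) (y : M) (hy : pFun ψ g y = 1/2) :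
    ∃ i j : ℝ, (i = 0 ∨ i = 1) ∧ (j = 0 ∨ j = 1) ∧
      (∀ t : ℝ, t ≤ -5 → g (ψ t y) = i) ∧ (∀ t : ℝ, 5 ≤ t → g (ψ t y) = j) := by
  set h : ℝ → ℝ := fun t => g (ψ t y) with hh
  have hhc : Continuous h := orbit_cont ψ g hcont hg y
  have hnotconst : ∀ c : ℝ, (c = 0 ∨ c = 1) → ¬ (∀ t ∈ Set.Icc (-2:ℝ) 2, h t = c) :=
    fun c hc hcc => pBound ψ g hcont hg hg01 y c hc hcc hy
  -- find a point where h is strictly between 0 and 1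
  have hex : ∃ s₀ : ℝ, 0 < h s₀ ∧ h s₀ < 1 := by
    by_contra hnone
    push_neg at hnone
    have h01 : ∀ t ∈ (Set.univ : Set ℝ), h t = 0 ∨ h t = 1 := by
      intro t _
      rcases eq_or_lt_of_le (hg01 (ψ t y)).1 with heq | hlt
      · exact Or.inl heq.symm
      · exact Or.inr (le_antisymm (hg01 (ψ t y)).2 (hnone t hlt))
    have hconst := const01 h hhc Set.univ Set.ordConnected_univ h01
    exact hnotconst (h 0) (h01 0 (Set.mem_univ 0))
      (fun t _ => hconst t (Set.mem_univ t) 0 (Set.mem_univ 0))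
  obtain ⟨s₀, hs1, hs2⟩ := hex
  have hout : ∀ t : ℝ, ℓ < |t - s₀| → h t = 0 ∨ h t = 1 := by
    intro t ht
    have := hgate (ψ s₀ y) hs1 hs2 (t - s₀) ht
    rwa [← hadd, sub_add_cancel] at this
  have hL := const01 h hhc (Set.Iio (s₀ - ℓ)) Set.ordConnected_Iio
    (fun t ht => hout t (lt_of_lt_of_le (by simp only [Set.mem_Iio] at ht; linarith) (neg_le_abs _)))
  have hR := const01 h hhc (Set.Ioi (s₀ + ℓ)) Set.ordConnected_Ioi
    (fun t ht => hout t (lt_of_lt_of_le (by simp only [Set.mem_Ioi] at ht; linarith) (le_abs_self _)))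
  have hub : s₀ ≤ ℓ + 2 := by
    by_contra hgt
    push_neg at hgt
    have h0mem : (0:ℝ) ∈ Set.Iio (s₀ - ℓ) := by simp only [Set.mem_Iio]; linarith
    have hc0 : h 0 = 0 ∨ h 0 = 1 :=
      hout 0 (lt_of_lt_of_le (by linarith) (neg_le_abs _))
    exact hnotconst (h 0) hc0
      (fun t ht => hL t (by simp only [Set.mem_Iio]; linarith [ht.2]) 0 h0mem)
  have hlb : -(ℓ + 2) ≤ s₀ := by
    by_contra hgt
    push_neg at hgt
    have h0mem : (0:ℝ) ∈ Set.Ioi (s₀ + ℓ) := by simp only [Set.mem_Ioi]; linarith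
    have hc0 : h 0 = 0 ∨ h 0 = 1 :=
      hout 0 (lt_of_lt_of_le (by linarith) (le_abs_self _))
    exact hnotconst (h 0) hc0
      (fun t ht => hR t (by simp only [Set.mem_Ioi]; linarith [ht.1]) 0 h0mem)
  have m5L : (-5:ℝ) ∈ Set.Iio (s₀ - ℓ) := by simp only [Set.mem_Iio]; linarith
  have m5R : (5:ℝ) ∈ Set.Ioi (s₀ + ℓ) := by simp only [Set.mem_Ioi]; linarith
  refine ⟨h (-5), h 5, ?_, ?_, ?_, ?_⟩
  · exact hout (-5) (lt_of_lt_of_le (by linarith) (neg_le_abs _))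
  · exact hout 5 (lt_of_lt_of_le (by linarith) (le_abs_self _))
  · intro t ht
    exact hL t (by simp only [Set.mem_Iio]; linarith) (-5) m5L
  · intro t ht
    exact hR t (by simp only [Set.mem_Ioi]; linarith) 5 m5R

end Aux

/-- assume `ℓ < 1`.  For each pair `(i,j)` with `i, j ∈ {0,1}`,
the set `X_{i,j} ∩ p⁻¹(1/2)` is open in the subspace topology of
`p⁻¹(1/2)`. -/
theorem stmt_14
    {M : Type*} [TopologicalSpace M] (ψ : ℝ → M → M)
    (hcont : Continuous fun q : ℝ × M => ψ q.1 q.2)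
    (hzero : ∀ x, ψ 0 x = x)
    (hadd : ∀ s t x, ψ (s + t) x = ψ s (ψ t x))
    (g : M → ℝ) (hg : Continuous g) (hg01 : ∀ x, g x ∈ Set.Icc (0 : ℝ) 1)
    (ℓ : ℝ) (hℓ : 0 < ℓ)
    (hgate : ∀ x, 0 < g x → g x < 1 → ∀ t : ℝ, ℓ < |t| →
      g (ψ t x) = 0 ∨ g (ψ t x) = 1)
    (hℓ1 : ℓ < 1) :
    ∀ i j : ℝ, i ∈ ({0, 1} : Set ℝ) → j ∈ ({0, 1} : Set ℝ) →
      IsOpen {y : pFun ψ g ⁻¹' {(1 / 2 : ℝ)} | (y : M) ∈ Xset ψ g i j} := by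
  intro i j hi hj
  have hi' : i = 0 ∨ i = 1 := by simpa using hi
  have hj' : j = 0 ∨ j = 1 := by simpa using hj
  have hV : IsOpen {x : M | |g (ψ (-5) x) - i| < 1/2 ∧ |g (ψ 5 x) - j| < 1/2} := by
    have c1 : Continuous fun x : M => |g (ψ (-5) x) - i| :=
      ((hg.comp (hcont.comp (continuous_const.prodMk continuous_id))).sub continuous_const).abs
    have c2 : Continuous fun x : M => |g (ψ 5 x) - j| :=
      ((hg.comp (hcont.comp (continuous_const.prodMk continuous_id))).sub continuous_const).abs
    exact (isOpen_lt c1 continuous_const).inter (isOpen_lt c2 continuous_const)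
  have hset : {y : pFun ψ g ⁻¹' {(1 / 2 : ℝ)} | (y : M) ∈ Xset ψ g i j} =
      Subtype.val ⁻¹' {x : M | |g (ψ (-5) x) - i| < 1/2 ∧ |g (ψ 5 x) - j| < 1/2} := by
    ext y
    have hpy : pFun ψ g (y : M) = 1/2 := y.2
    obtain ⟨i', j', hi0, hj0, hti, htj⟩ :=
      tails ψ g hcont hadd hg hg01 ℓ hℓ hgate hℓ1 (y : M) hpy
    have hbot' : Tendsto (fun t => g (ψ t (y : M))) atBot (nhds i') :=
      tendsto_const_nhds.congr'
        (by filter_upwards [eventually_le_atBot (-5:ℝ)] with t ht using (hti t ht).symm)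
    have htop' : Tendsto (fun t => g (ψ t (y : M))) atTop (nhds j') :=
      tendsto_const_nhds.congr'
        (by filter_upwards [eventually_ge_atTop (5:ℝ)] with t ht using (htj t ht).symm)
    simp only [Set.mem_setOf_eq, Set.mem_preimage]
    constructor
    · rintro ⟨hbot, htop⟩
      have e1 : i' = i := tendsto_nhds_unique hbot' hbot
      have e2 : j' = j := tendsto_nhds_unique htop' htop
      rw [hti (-5) le_rfl, htj 5 le_rfl, e1, e2]
      norm_num
    · rintro ⟨h1, h2⟩
      rw [hti (-5) le_rfl] at h1
      rw [htj 5 le_rfl] at h2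
      have e1 : i' = i := by
        rcases hi0 with rfl | rfl <;> rcases hi' with rfl | rfl <;> revert h1 <;> norm_num
      have e2 : j' = j := by
        rcases hj0 with rfl | rfl <;> rcases hj' with rfl | rfl <;> revert h2 <;> norm_num
      exact ⟨e1 ▸ hbot', e2 ▸ htop'⟩
  rw [hset]
  exact hV.preimage continuous_subtype_val
end
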